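/- arXiv:1412.4278 — 12 statements merged into one kernel-verified Lean document; each statement's English description precedes it below -/
import Mathlib

section
/- Let x₀ ∈ (x_min, x_max) and let x : [0,∞) → ℝ be differentiable with x(0) = x₀ and with −φ(x(t)) − g ≤ x'(t) ≤ 1 − φ(x(t)) − g for all t ≥ 0 (i.e., x is a trajectory of the control system ẋ = u − φ(x) − g for some control u(t) ∈ [0,1]). Then x(t) ∈ (x_min, x_max) for all t ≥ 0. Consequently, at any time t where x'(t) = 1 − φ(x(t)) − g (control u = 1) one has x'(t) > 0, and at any time t where x'(t) = −φ(x(t)) − g (control u = 0) one has x'(t) < 0. -/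
/-- Trajectories of the control system stay in (x_min, x_max); hence
    with control u = 1 the velocity derivative is positive, with u = 0 negative. -/
theorem stmt_0 (φ : ℝ → ℝ) (g xmin xmax : ℝ)
    (hφ0 : φ 0 = 0)
    (hφdiff : Differentiable ℝ φ)
    (hφ' : ∀ y : ℝ, 0 < deriv φ y)
    (hφC2 : ContDiffOn ℝ 2 φ {(0:ℝ)}ᶜ)
    (hφ''neg : ∀ y : ℝ, y < 0 → deriv (deriv φ) y < 0)
    (hφ''pos : ∀ y : ℝ, 0 < y → 0 < deriv (deriv φ) y)
    (hg0 : 0 < g) (hg1 : g < 1)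
    (hxminneg : xmin < 0) (hxmaxpos : 0 < xmax)
    (hmin : φ xmin = -g) (hmax : φ xmax = 1 - g)
    (x₀ : ℝ) (hx₀ : x₀ ∈ Set.Ioo xmin xmax)
    (x : ℝ → ℝ) (hxdiff : Differentiable ℝ x) (hx0 : x 0 = x₀)
    (hdyn : ∀ t : ℝ, 0 ≤ t →
      -(φ (x t)) - g ≤ deriv x t ∧ deriv x t ≤ 1 - φ (x t) - g) :
    (∀ t : ℝ, 0 ≤ t → x t ∈ Set.Ioo xmin xmax) ∧
    (∀ t : ℝ, 0 ≤ t → deriv x t = 1 - φ (x t) - g → 0 < deriv x t) ∧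
    (∀ t : ℝ, 0 ≤ t → deriv x t = -(φ (x t)) - g → deriv x t < 0) := by
  have hmono : StrictMono φ := strictMono_of_deriv_pos hφ'
  set L : ℝ := max (max (deriv φ xmin) (deriv φ xmax)) (deriv φ 0) with hLdef
  have hL0 : 0 < L := lt_of_lt_of_le (hφ' 0) (le_max_right _ _)
  have hcontd : ContinuousOn (deriv φ) {(0:ℝ)}ᶜ :=
    hφC2.continuousOn_deriv_of_isOpen isOpen_compl_singleton (by norm_num)
  -- derivative bound on [xmin, xmax]
  have hbound : ∀ y ∈ Set.Icc xmin xmax, deriv φ y ≤ L := by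
    intro y hy
    rcases lt_trichotomy y 0 with hy0 | hy0 | hy0
    · rcases eq_or_lt_of_le hy.1 with he | hlt
      · rw [← he]; exact le_trans (le_max_left _ _) (le_max_left _ _)
      · have hsub : Set.Icc xmin y ⊆ {(0:ℝ)}ᶜ := by
          intro z hz
          simp only [Set.mem_compl_iff, Set.mem_singleton_iff]
          exact ne_of_lt (lt_of_le_of_lt hz.2 hy0)
        have hanti : StrictAntiOn (deriv φ) (Set.Icc xmin y) :=
          strictAntiOn_of_deriv_neg (convex_Icc _ _) (hcontd.mono hsub)
            (fun z hz => hφ''neg z (by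
              rw [interior_Icc] at hz; exact lt_trans hz.2 hy0))
        have h1 := hanti (Set.left_mem_Icc.2 hlt.le) (Set.right_mem_Icc.2 hlt.le) hlt
        exact le_trans h1.le (le_trans (le_max_left _ _) (le_max_left _ _))
    · rw [hy0]; exact le_max_right _ _
    · rcases eq_or_lt_of_le hy.2 with he | hlt
      · rw [he]; exact le_trans (le_max_right _ _) (le_max_left _ _)
      · have hsub : Set.Icc y xmax ⊆ {(0:ℝ)}ᶜ := by
          intro z hz
          simp only [Set.mem_compl_iff, Set.mem_singleton_iff]
          exact ne_of_gt (lt_of_lt_of_le hy0 hz.1)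
        have hmono' : StrictMonoOn (deriv φ) (Set.Icc y xmax) :=
          strictMonoOn_of_deriv_pos (convex_Icc _ _) (hcontd.mono hsub)
            (fun z hz => hφ''pos z (by
              rw [interior_Icc] at hz; exact lt_trans hy0 hz.1))
        have h1 := hmono' (Set.left_mem_Icc.2 hlt.le) (Set.right_mem_Icc.2 hlt.le) hlt
        exact le_trans h1.le (le_trans (le_max_right _ _) (le_max_left _ _))
  -- Lipschitz-type bound
  have hlip : ∀ u v : ℝ, xmin ≤ u → u ≤ v → v ≤ xmax → φ v - φ u ≤ L * (v - u) := by
    intro u v h1 h2 h3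
    rcases eq_or_lt_of_le h2 with he | hlt
    · rw [he]; simp
    · obtain ⟨c, hc, hderiv⟩ := exists_hasDerivAt_eq_slope φ (deriv φ) hlt
        hφdiff.continuous.continuousOn (fun z _ => (hφdiff z).hasDerivAt)
      have hcL : deriv φ c ≤ L := hbound c ⟨le_trans h1 hc.1.le, le_trans hc.2.le h3⟩
      have hslope : (φ v - φ u) / (v - u) ≤ L := hderiv ▸ hcL
      have hvu : 0 < v - u := sub_pos.2 hlt
      calc φ v - φ u = (φ v - φ u) / (v - u) * (v - u) := by field_simp
        _ ≤ L * (v - u) := mul_le_mul_of_nonneg_right hslope hvu.le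
  -- invariance
  have hinv : ∀ t : ℝ, 0 ≤ t → x t ∈ Set.Ioo xmin xmax := by
    by_contra hcon
    push_neg at hcon
    obtain ⟨t₁, ht₁0, ht₁⟩ := hcon
    set A : Set ℝ := {t | 0 ≤ t ∧ x t ∉ Set.Ioo xmin xmax} with hAdef
    have hAne : A.Nonempty := ⟨t₁, ht₁0, ht₁⟩
    have hAbdd : BddBelow A := ⟨0, fun t ht => ht.1⟩
    have hAclosed : IsClosed A := by
      have he : A = Set.Ici 0 ∩ x ⁻¹' (Set.Ioo xmin xmax)ᶜ := by
        ext t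
        simp only [hAdef, Set.mem_setOf_eq, Set.mem_inter_iff, Set.mem_Ici,
          Set.mem_preimage, Set.mem_compl_iff]
      rw [he]
      exact isClosed_Ici.inter (isOpen_Ioo.isClosed_compl.preimage hxdiff.continuous)
    set T : ℝ := sInf A with hTdef
    have hTA : T ∈ A := hAclosed.csInf_mem hAne hAbdd
    have hT0 : 0 ≤ T := hTA.1
    have hTpos : 0 < T := by
      rcases eq_or_lt_of_le hT0 with he | h
      · exfalso; apply hTA.2; rw [← he, hx0]; exact hx₀
      · exact h
    have hbefore : ∀ s : ℝ, 0 ≤ s → s < T → x s ∈ Set.Ioo xmin xmax := by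
      intro s hs0 hsT
      by_contra hns
      exact absurd (csInf_le hAbdd ⟨hs0, hns⟩) (not_le.2 hsT)
    have hXT : x T ∈ Set.Icc xmin xmax := by
      have htend : Filter.Tendsto x (nhdsWithin T (Set.Iio T)) (nhds (x T)) :=
        (hxdiff.continuous.tendsto T).mono_left nhdsWithin_le_nhds
      apply isClosed_Icc.mem_of_tendsto htend
      filter_upwards [Ioo_mem_nhdsLT_of_mem (Set.mem_Ioc.2 ⟨hTpos, le_refl T⟩)] with s hs
      exact Set.Ioo_subset_Icc_self (hbefore s hs.1.le hs.2)
    -- helper: monotonicity of Gronwall-type auxiliary function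
    have hgron : ∀ (f : ℝ → ℝ), Differentiable ℝ f →
        (∀ t ∈ Set.Ioo (0:ℝ) T, deriv f t ≥ -L * f t) →
        (fun t => f t * Real.exp (L * t)) 0 ≤ (fun t => f t * Real.exp (L * t)) T := by
      intro f hfdiff hfge
      have hhdiff : Differentiable ℝ (fun t => f t * Real.exp (L * t)) :=
        hfdiff.mul (Real.differentiable_exp.comp ((differentiable_const L).mul differentiable_id))
      have hmonoh : MonotoneOn (fun t => f t * Real.exp (L * t)) (Set.Icc 0 T) := by
        apply monotoneOn_of_deriv_nonneg (convex_Icc 0 T) hhdiff.continuous.continuousOn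
          hhdiff.differentiableOn
        intro t ht
        rw [interior_Icc] at ht
        have hx1 : HasDerivAt f (deriv f t) t := (hfdiff t).hasDerivAt
        have he1 : HasDerivAt (fun t => Real.exp (L * t)) (Real.exp (L * t) * L) t := by
          simpa using ((hasDerivAt_id t).const_mul L).exp
        have hh : HasDerivAt (fun t => f t * Real.exp (L * t))
            (deriv f t * Real.exp (L * t) + f t * (Real.exp (L * t) * L)) t := hx1.mul he1
        rw [hh.deriv]
        have hE := Real.exp_pos (L * t)
        have := hfge t ht
        nlinarith
      exact hmonoh (Set.left_mem_Icc.2 hT0) (Set.right_mem_Icc.2 hT0) hT0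
    rcases (Set.mem_Icc.1 hXT).2.eq_or_lt with hTmax | hlt2
    · -- x T = xmax
      have key := hgron (fun t => xmax - x t) ((differentiable_const xmax).sub hxdiff) ?_
      · simp only [hx0, hTmax, sub_self, zero_mul, mul_zero, Real.exp_zero, mul_one] at key
        have : 0 < xmax - x₀ := sub_pos.2 hx₀.2
        linarith
      · intro t ht
        have hxt := hbefore t ht.1.le ht.2
        have hder : deriv (fun t => xmax - x t) t = -(deriv x t) := by
          have h1 : HasDerivAt (fun t => xmax - x t) (0 - deriv x t) t :=
            (hasDerivAt_const t xmax).sub (hxdiff t).hasDerivAt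
          simpa using h1.deriv
        rw [hder]
        show -(deriv x t) ≥ -L * (xmax - x t)
        have hd := (hdyn t ht.1.le).2
        have heq : 1 - φ (x t) - g = φ xmax - φ (x t) := by rw [hmax]; ring
        rw [heq] at hd
        have hlipt := hlip (x t) xmax hxt.1.le hxt.2.le le_rfl
        linarith
    · rcases (Set.mem_Icc.1 hXT).1.eq_or_lt with hTmin | hgt2
      · -- x T = xmin
        have key := hgron (fun t => x t - xmin) (hxdiff.sub (differentiable_const xmin)) ?_
        · simp only [hx0, ← hTmin, sub_self, zero_mul, mul_zero, Real.exp_zero, mul_one] at key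
          have : 0 < x₀ - xmin := sub_pos.2 hx₀.1
          linarith
        · intro t ht
          have hxt := hbefore t ht.1.le ht.2
          have hder : deriv (fun t => x t - xmin) t = deriv x t := by
            have h1 : HasDerivAt (fun t => x t - xmin) (deriv x t - 0) t :=
              (hxdiff t).hasDerivAt.sub (hasDerivAt_const t xmin)
            simpa using h1.deriv
          rw [hder]
          show deriv x t ≥ -L * (x t - xmin)
          have hd := (hdyn t ht.1.le).1
          have heq : -(φ (x t)) - g = φ xmin - φ (x t) := by rw [hmin]; ring
          rw [heq] at hd
          have hlipt := hlip xmin (x t) le_rfl hxt.1.le hxt.2.le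
          linarith
      · exact hTA.2 ⟨hgt2, hlt2⟩
  refine ⟨hinv, ?_, ?_⟩
  · intro t ht hder
    have hxt := hinv t ht
    have : φ (x t) < φ xmax := hmono hxt.2
    rw [hder, hmax] at *
    linarith
  · intro t ht hder
    have hxt := hinv t ht
    have : φ xmin < φ (x t) := hmono hxt.1
    rw [hder, hmin] at *
    linarith
end

section
/- Let T > 0, let a : [0,T] → ℝ be continuous, and let ψ : [0,T] → ℝ be differentiable with ψ'(t) = −1 + ψ(t)·a(t) for all t ∈ [0,T] and ψ(T) = 0. Then ψ(t) > 0 for all t ∈ [0,T). -/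
/-- Positivity of the adjoint variable before the final time. -/
theorem stmt_2 (T : ℝ) (hT : 0 < T)
    (a : ℝ → ℝ) (ha : ContinuousOn a (Set.Icc 0 T))
    (ψ : ℝ → ℝ)
    (hψ : ∀ t ∈ Set.Icc (0:ℝ) T, HasDerivAt ψ (-1 + ψ t * a t) t)
    (hψT : ψ T = 0) :
    ∀ t ∈ Set.Ico (0:ℝ) T, 0 < ψ t := by
  -- continuous extension of a
  set a' : ℝ → ℝ := fun t => a (Set.projIcc 0 T hT.le t) with ha'def
  have ha'cont : Continuous a' := by
    exact (continuousOn_iff_continuous_restrict.mp ha).comp continuous_projIcc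
  have ha'eq : ∀ t ∈ Set.Icc (0:ℝ) T, a' t = a t := by
    intro t ht
    simp [ha'def, Set.projIcc_of_mem hT.le ht]
  -- antiderivative
  set A : ℝ → ℝ := fun t => ∫ s in (0:ℝ)..t, a' s with hAdef
  have hA : ∀ t, HasDerivAt A (a' t) t := fun t =>
    (ha'cont.integral_hasStrictDerivAt 0 t).hasDerivAt
  set g : ℝ → ℝ := fun t => ψ t * Real.exp (-A t) with hgdef
  have hg : ∀ t ∈ Set.Icc (0:ℝ) T, HasDerivAt g (-Real.exp (-A t)) t := by
    intro t ht
    have h1 : HasDerivAt (fun t => Real.exp (-A t)) (-a' t * Real.exp (-A t)) t := by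
      have := (Real.hasDerivAt_exp (-A t)).comp t ((hA t).neg)
      exact this.congr_deriv (by ring)
    have := (hψ t ht).mul h1
    exact this.congr_deriv (by rw [ha'eq t ht]; ring)
  have hanti : StrictAntiOn g (Set.Icc 0 T) := by
    apply strictAntiOn_of_hasDerivWithinAt_neg (convex_Icc 0 T)
      (fun t ht => (hg t ht).continuousAt.continuousWithinAt)
      (f' := fun t => -Real.exp (-A t))
    · intro x hx
      rw [interior_Icc] at hx
      exact (hg x (Set.mem_Icc_of_Ioo hx)).hasDerivWithinAt
    · intro x _
      simp [Real.exp_pos]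
  intro t ht
  have h := hanti (Set.mem_Icc_of_Ico ht) (Set.right_mem_Icc.mpr hT.le) ht.2
  rw [hgdef] at h
  simp only [hψT, zero_mul] at h
  exact (mul_pos_iff.mp h).elim (fun h => h.1)
    (fun h => absurd h.2 (not_lt.mpr (Real.exp_pos _).le))
end

section
/- There do not exist α > 0, δ > 0, t' ∈ ℝ, and differentiable functions x, ψ : [t', t'+δ] → ℝ such that: x(t) < 0 for all t ∈ [t', t'+δ]; ψ(t') = α; ψ'(t') = 0; ψ'(t) = −1 + ψ(t)·φ'(x(t)) for all t ∈ [t', t'+δ]; and EITHER (a) ψ(t) > α for all t ∈ (t', t'+δ) together with x'(t) = 1 − φ(x(t)) − g and x(t) < x_max on [t', t'+δ], OR (b) ψ(t) < α for all t ∈ (t', t'+δ) together with x'(t) = −φ(x(t)) − g and x(t) > x_min on [t', t'+δ]. (That is, the adjoint variable cannot leave the switching level ψ = α with zero derivative at a time where the velocity is negative.) -/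
open Set Filter

/-- If `f t' = 0` and `f` has negative derivative at `t'`, then `f < 0` on a right
neighborhood of `t'`. -/
lemma right_neg_aux {f : ℝ → ℝ} {t' d : ℝ} (hf : HasDerivAt f d t')
    (h0 : f t' = 0) (hd : d < 0) :
    ∃ u, t' < u ∧ ∀ t ∈ Set.Ioo t' u, f t < 0 := by
  have h1 : Filter.Tendsto (slope f t') (nhdsWithin t' (Set.Ioi t')) (nhds d) := by
    have h2 := (hf.hasDerivWithinAt (s := Set.Ioi t'))
    rw [hasDerivWithinAt_iff_tendsto_slope' (by simp)] at h2
    exact h2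
  have h2 : {t | slope f t' t < 0} ∈ nhdsWithin t' (Set.Ioi t') :=
    h1.eventually_lt_const hd
  obtain ⟨u, hu, hsub⟩ := mem_nhdsGT_iff_exists_Ioo_subset.mp h2
  refine ⟨u, hu, fun t ht => ?_⟩
  have hs : slope f t' t < 0 := hsub ht
  rw [slope_def_field] at hs
  have hpos : 0 < t - t' := by linarith [ht.1]
  rw [div_neg_iff] at hs
  rcases hs with ⟨_, h⟩ | ⟨h, _⟩
  · linarith
  · linarith

/-- The adjoint variable cannot leave the switching level ψ = α with
    zero derivative at a time where the velocity is negative. -/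
theorem stmt_5 (φ : ℝ → ℝ) (g xmin xmax : ℝ)
    (hφ0 : φ 0 = 0)
    (hφdiff : Differentiable ℝ φ)
    (hφ' : ∀ y : ℝ, 0 < deriv φ y)
    (hφC2 : ContDiffOn ℝ 2 φ {(0:ℝ)}ᶜ)
    (hφ''neg : ∀ y : ℝ, y < 0 → deriv (deriv φ) y < 0)
    (hφ''pos : ∀ y : ℝ, 0 < y → 0 < deriv (deriv φ) y)
    (hg0 : 0 < g) (hg1 : g < 1)
    (hxminneg : xmin < 0) (hxmaxpos : 0 < xmax)
    (hmin : φ xmin = -g) (hmax : φ xmax = 1 - g) :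
    ¬ ∃ (α δ t' : ℝ) (x ψ : ℝ → ℝ),
      0 < α ∧ 0 < δ ∧
      (∀ t ∈ Set.Icc t' (t' + δ), x t < 0) ∧
      ψ t' = α ∧
      deriv ψ t' = 0 ∧
      (∀ t ∈ Set.Icc t' (t' + δ), HasDerivAt ψ (-1 + ψ t * deriv φ (x t)) t) ∧
      (((∀ t ∈ Set.Ioo t' (t' + δ), α < ψ t) ∧
          (∀ t ∈ Set.Icc t' (t' + δ), HasDerivAt x (1 - φ (x t) - g) t) ∧
          (∀ t ∈ Set.Icc t' (t' + δ), x t < xmax)) ∨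
        ((∀ t ∈ Set.Ioo t' (t' + δ), ψ t < α) ∧
          (∀ t ∈ Set.Icc t' (t' + δ), HasDerivAt x (-(φ (x t)) - g) t) ∧
          (∀ t ∈ Set.Icc t' (t' + δ), xmin < x t))) := by
  rintro ⟨α, δ, t', x, ψ, hα, hδ, hxneg, hψ0, hdψ0, hψode, hcase⟩
  have ht'mem : t' ∈ Set.Icc t' (t' + δ) := ⟨le_refl _, by linarith⟩
  set a := x t' with ha_def
  have ha : a < 0 := hxneg t' ht'mem
  have hψt' : HasDerivAt ψ (-1 + ψ t' * deriv φ (x t')) t' := hψode t' ht'mem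
  have hH0 : -1 + ψ t' * deriv φ a = 0 := by
    have h := hψt'.deriv
    rw [hdψ0] at h
    exact h.symm
  -- second derivative of φ exists at a
  have hφ''a : HasDerivAt (deriv φ) (deriv (deriv φ) a) a := by
    have hopen : IsOpen ({(0:ℝ)}ᶜ) := isOpen_compl_singleton
    have hmem : a ∈ ({(0:ℝ)}ᶜ : Set ℝ) := by
      simp only [Set.mem_compl_iff, Set.mem_singleton_iff]
      exact ne_of_lt ha
    have h1 : ContDiffOn ℝ 1 (deriv φ) ({(0:ℝ)}ᶜ) := by
      have := hφC2.deriv_of_isOpen hopen (m := 1) (by norm_num)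
      exact this
    exact ((h1.differentiableOn one_ne_zero).differentiableAt (hopen.mem_nhds hmem)).hasDerivAt
  have hmono : StrictMono φ := strictMono_of_deriv_pos hφ'
  -- the function H(t) = ψ'(t)
  set H : ℝ → ℝ := fun t => -1 + ψ t * deriv φ (x t) with hH_def
  have hHt'0 : H t' = 0 := hH0
  rcases hcase with ⟨hgt, hxode, hxlt⟩ | ⟨hlt, hxode, hxgt⟩
  · -- case (a)
    have hxd : HasDerivAt x (1 - φ (x t') - g) t' := hxode t' ht'mem
    have hcomp : HasDerivAt (fun t => deriv φ (x t))
        (deriv (deriv φ) a * (1 - φ a - g)) t' := hφ''a.comp t' hxd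
    have hH : HasDerivAt H
        ((-1 + ψ t' * deriv φ a) * deriv φ a +
          ψ t' * (deriv (deriv φ) a * (1 - φ a - g))) t' :=
      (hψt'.mul hcomp).const_add (-1)
    rw [hH0, hψ0] at hH
    have hvel : 0 < 1 - φ a - g := by
      have := hmono (hxlt t' ht'mem)
      rw [hmax] at this
      linarith
    have hd : (0 : ℝ) * deriv φ a + α * (deriv (deriv φ) a * (1 - φ a - g)) < 0 := by
      have h2 := hφ''neg a ha
      have h3 : α * (deriv (deriv φ) a * (1 - φ a - g)) < 0 :=
        mul_neg_of_pos_of_neg hα (mul_neg_of_neg_of_pos h2 hvel)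
      linarith [h3, zero_mul (deriv φ a)]
    obtain ⟨u, hu, hneg⟩ := right_neg_aux hH hHt'0 hd
    -- choose a point b in (t', min u (t'+δ))
    set b : ℝ := (t' + min u (t' + δ)) / 2 with hb_def
    have hb1 : t' < b := by
      have : t' < min u (t' + δ) := lt_min hu (by linarith)
      simp only [hb_def]; linarith
    have hb2 : b < u := by
      have : min u (t' + δ) ≤ u := min_le_left _ _
      have h3 : t' < min u (t' + δ) := lt_min hu (by linarith)
      simp only [hb_def]; linarith
    have hb3 : b < t' + δ := by
      have : min u (t' + δ) ≤ t' + δ := min_le_right _ _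
      have h3 : t' < min u (t' + δ) := lt_min hu (by linarith)
      simp only [hb_def]; linarith
    have hsub : Set.Icc t' b ⊆ Set.Icc t' (t' + δ) :=
      Set.Icc_subset_Icc le_rfl (le_of_lt hb3)
    obtain ⟨c, hc, hceq⟩ := exists_hasDerivAt_eq_slope ψ H hb1
      (fun t ht => ((hψode t (hsub ht)).continuousAt).continuousWithinAt)
      (fun t ht => hψode t (hsub (Set.mem_Icc_of_Ioo ht)))
    have hHcneg : H c < 0 := hneg c ⟨hc.1, lt_trans hc.2 hb2⟩
    have hψb : α < ψ b := hgt b ⟨hb1, hb3⟩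
    rw [hceq, hψ0] at hHcneg
    have : 0 < (ψ b - α) / (b - t') := div_pos (by linarith) (by linarith)
    linarith
  · -- case (b)
    have hxd : HasDerivAt x (-(φ (x t')) - g) t' := hxode t' ht'mem
    have hcomp : HasDerivAt (fun t => deriv φ (x t))
        (deriv (deriv φ) a * (-(φ a) - g)) t' := hφ''a.comp t' hxd
    have hH : HasDerivAt H
        ((-1 + ψ t' * deriv φ a) * deriv φ a +
          ψ t' * (deriv (deriv φ) a * (-(φ a) - g))) t' :=
      (hψt'.mul hcomp).const_add (-1)
    rw [hH0, hψ0] at hH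
    have hvel : -(φ a) - g < 0 := by
      have := hmono (hxgt t' ht'mem)
      rw [hmin] at this
      linarith
    have hd : (0 : ℝ) * deriv φ a + α * (deriv (deriv φ) a * (-(φ a) - g)) > 0 := by
      have h2 := hφ''neg a ha
      have h3 : 0 < α * (deriv (deriv φ) a * (-(φ a) - g)) :=
        mul_pos hα (mul_pos_of_neg_of_neg h2 hvel)
      linarith [h3, zero_mul (deriv φ a)]
    have hHneg : HasDerivAt (fun t => -(H t))
        (-((0 : ℝ) * deriv φ a + α * (deriv (deriv φ) a * (-(φ a) - g)))) t' := hH.neg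
    obtain ⟨u, hu, hneg⟩ := right_neg_aux hHneg (by simp [hHt'0]) (by linarith)
    set b : ℝ := (t' + min u (t' + δ)) / 2 with hb_def
    have hb1 : t' < b := by
      have : t' < min u (t' + δ) := lt_min hu (by linarith)
      simp only [hb_def]; linarith
    have hb2 : b < u := by
      have : min u (t' + δ) ≤ u := min_le_left _ _
      have h3 : t' < min u (t' + δ) := lt_min hu (by linarith)
      simp only [hb_def]; linarith
    have hb3 : b < t' + δ := by
      have : min u (t' + δ) ≤ t' + δ := min_le_right _ _
      have h3 : t' < min u (t' + δ) := lt_min hu (by linarith)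
      simp only [hb_def]; linarith
    have hsub : Set.Icc t' b ⊆ Set.Icc t' (t' + δ) :=
      Set.Icc_subset_Icc le_rfl (le_of_lt hb3)
    obtain ⟨c, hc, hceq⟩ := exists_hasDerivAt_eq_slope ψ H hb1
      (fun t ht => ((hψode t (hsub ht)).continuousAt).continuousWithinAt)
      (fun t ht => hψode t (hsub (Set.mem_Icc_of_Ioo ht)))
    have hHcpos : 0 < H c := by
      have := hneg c ⟨hc.1, lt_trans hc.2 hb2⟩
      linarith
    have hψb : ψ b < α := hlt b ⟨hb1, hb3⟩
    rw [hceq, hψ0] at hHcpos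
    have : (ψ b - α) / (b - t') < 0 := div_neg_of_neg_of_pos (by linarith) (by linarith)
    linarith
end

section
/- There do not exist α > 0, δ > 0, t'' ∈ ℝ, and differentiable functions x, ψ : [t''−δ, t''] → ℝ such that: x(t) < 0 for all t ∈ [t''−δ, t'']; ψ(t'') = α; ψ'(t'') = 0; ψ'(t) = −1 + ψ(t)·φ'(x(t)) for all t ∈ [t''−δ, t'']; and EITHER (a) ψ(t) > α for all t ∈ (t''−δ, t'') together with x'(t) = 1 − φ(x(t)) − g and x(t) < x_max on [t''−δ, t''], OR (b) ψ(t) < α for all t ∈ (t''−δ, t'') together with x'(t) = −φ(x(t)) − g and x(t) > x_min on [t''−δ, t'']. (That is, the adjoint variable cannot reach the switching level ψ = α with zero derivative at a time where the velocity is negative.) -/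
/-- The adjoint variable cannot reach the switching level ψ = α with
    zero derivative at a time where the velocity is negative. -/
theorem stmt_6 (φ : ℝ → ℝ) (g xmin xmax : ℝ)
    (hφ0 : φ 0 = 0)
    (hφdiff : Differentiable ℝ φ)
    (hφ' : ∀ y : ℝ, 0 < deriv φ y)
    (hφC2 : ContDiffOn ℝ 2 φ {(0:ℝ)}ᶜ)
    (hφ''neg : ∀ y : ℝ, y < 0 → deriv (deriv φ) y < 0)
    (hφ''pos : ∀ y : ℝ, 0 < y → 0 < deriv (deriv φ) y)
    (hg0 : 0 < g) (hg1 : g < 1)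
    (hxminneg : xmin < 0) (hxmaxpos : 0 < xmax)
    (hmin : φ xmin = -g) (hmax : φ xmax = 1 - g) :
    ¬ ∃ (α δ t'' : ℝ) (x ψ : ℝ → ℝ),
      0 < α ∧ 0 < δ ∧
      (∀ t ∈ Set.Icc (t'' - δ) t'', x t < 0) ∧
      ψ t'' = α ∧
      deriv ψ t'' = 0 ∧
      (∀ t ∈ Set.Icc (t'' - δ) t'', HasDerivAt ψ (-1 + ψ t * deriv φ (x t)) t) ∧
      (((∀ t ∈ Set.Ioo (t'' - δ) t'', α < ψ t) ∧
          (∀ t ∈ Set.Icc (t'' - δ) t'', HasDerivAt x (1 - φ (x t) - g) t) ∧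
          (∀ t ∈ Set.Icc (t'' - δ) t'', x t < xmax)) ∨
        ((∀ t ∈ Set.Ioo (t'' - δ) t'', ψ t < α) ∧
          (∀ t ∈ Set.Icc (t'' - δ) t'', HasDerivAt x (-(φ (x t)) - g) t) ∧
          (∀ t ∈ Set.Icc (t'' - δ) t'', xmin < x t))) := by
  rintro ⟨α, δ, T, x, ψ, hα, hδ, hxneg, hψT, hψ'T, hψ, hcase⟩
  -- φ is strictly monotone
  have hmono : StrictMono φ := strictMono_of_deriv_pos hφ'
  -- deriv φ is strictly decreasing on negatives
  have hC1 : ContDiffOn ℝ 1 (deriv φ) {(0:ℝ)}ᶜ :=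
    hφC2.deriv_of_isOpen isOpen_compl_singleton (by norm_num)
  have hcontd : ContinuousOn (deriv φ) (Set.Iio (0:ℝ)) :=
    hC1.continuousOn.mono (by intro y hy; exact ne_of_lt hy)
  have hanti : StrictAntiOn (deriv φ) (Set.Iio (0:ℝ)) := by
    apply strictAntiOn_of_deriv_neg (convex_Iio 0) hcontd
    rw [interior_Iio]; exact hφ''neg
  -- at T: α * φ'(x T) = 1
  have hTmem : T ∈ Set.Icc (T - δ) T := ⟨by linarith, le_refl T⟩
  have hkey : α * deriv φ (x T) = 1 := by
    have := (hψ T hTmem).deriv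
    rw [hψ'T, hψT] at this
    linarith
  have hxTneg : x T < 0 := hxneg T hTmem
  have hdT : 0 < deriv φ (x T) := hφ' (x T)
  -- the test point
  set t0 : ℝ := T - δ / 2 with ht0def
  have ht0Ioo : t0 ∈ Set.Ioo (T - δ) T := ⟨by simp [ht0def]; linarith, by simp [ht0def]; linarith⟩
  have hsub : Set.Icc t0 T ⊆ Set.Icc (T - δ) T :=
    Set.Icc_subset_Icc (by simp [ht0def]; linarith) (le_refl T)
  have hψcont : ContinuousOn ψ (Set.Icc t0 T) := fun t ht =>
    ((hψ t (hsub ht)).differentiableAt.continuousAt).continuousWithinAt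
  have ht0T : t0 < T := ht0Ioo.2
  have ht0mem : t0 ∈ Set.Icc t0 T := ⟨le_refl t0, le_of_lt ht0T⟩
  have hTmem' : T ∈ Set.Icc t0 T := ⟨le_of_lt ht0T, le_refl T⟩
  have hxcont : ContinuousOn x (Set.Icc (T - δ) T) := by
    rcases hcase with ⟨_, hx, _⟩ | ⟨_, hx, _⟩ <;>
      exact fun t ht => ((hx t ht).differentiableAt.continuousAt).continuousWithinAt
  rcases hcase with ⟨hψgt, hx, hxlt⟩ | ⟨hψlt, hx, hxgt⟩
  · -- Case (a): x increasing, so φ'(x t) > φ'(x T), ψ' > 0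
    have hxmono : StrictMonoOn x (Set.Icc (T - δ) T) := by
      apply strictMonoOn_of_deriv_pos (convex_Icc _ _) hxcont
      intro t ht
      rw [interior_Icc] at ht
      rw [(hx t (Set.Ioo_subset_Icc_self ht)).deriv]
      have := hxlt t (Set.Ioo_subset_Icc_self ht)
      have := hmono this
      rw [hmax] at this
      linarith
    have hψ'pos : ∀ t ∈ Set.Ioo t0 T, 0 < deriv ψ t := by
      intro t ht
      have htIoo : t ∈ Set.Ioo (T - δ) T := ⟨lt_trans ht0Ioo.1 ht.1, ht.2⟩
      have htIcc := Set.Ioo_subset_Icc_self htIoo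
      rw [(hψ t htIcc).deriv]
      have hxlt' : x t < x T := hxmono htIcc hTmem htIoo.2
      have hd : deriv φ (x T) < deriv φ (x t) := hanti (hxneg t htIcc) hxTneg hxlt'
      have hψt : α < ψ t := hψgt t htIoo
      nlinarith
    have := (strictMonoOn_of_deriv_pos (convex_Icc t0 T) hψcont
      (by rw [interior_Icc]; exact hψ'pos)) ht0mem hTmem' ht0T
    have h2 := hψgt t0 ht0Ioo
    rw [hψT] at this
    linarith
  · -- Case (b): x decreasing, so φ'(x t) < φ'(x T), ψ' < 0
    have hxanti : StrictAntiOn x (Set.Icc (T - δ) T) := by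
      apply strictAntiOn_of_deriv_neg (convex_Icc _ _) hxcont
      intro t ht
      rw [interior_Icc] at ht
      rw [(hx t (Set.Ioo_subset_Icc_self ht)).deriv]
      have := hxgt t (Set.Ioo_subset_Icc_self ht)
      have := hmono this
      rw [hmin] at this
      linarith
    have hψ'neg : ∀ t ∈ Set.Ioo t0 T, deriv ψ t < 0 := by
      intro t ht
      have htIoo : t ∈ Set.Ioo (T - δ) T := ⟨lt_trans ht0Ioo.1 ht.1, ht.2⟩
      have htIcc := Set.Ioo_subset_Icc_self htIoo
      rw [(hψ t htIcc).deriv]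
      have hxgt' : x T < x t := hxanti htIcc hTmem htIoo.2
      have hd : deriv φ (x t) < deriv φ (x T) := hanti hxTneg (hxneg t htIcc) hxgt'
      have hψt : ψ t < α := hψlt t htIoo
      have hdt : 0 < deriv φ (x t) := hφ' (x t)
      rcases le_or_gt (ψ t) 0 with h | h
      · nlinarith
      · nlinarith
    have := (strictAntiOn_of_deriv_neg (convex_Icc t0 T) hψcont
      (by rw [interior_Icc]; exact hψ'neg)) ht0mem hTmem' ht0T
    have h2 := hψlt t0 ht0Ioo
    rw [hψT] at this
    linarith
end

section
/- Let T > 0, α > 0, and let x, ψ : [0,T] → ℝ be differentiable with: ψ'(t) = −1 + ψ(t)·φ'(x(t)) for all t; x(t) ∈ (x_min, x_max) for all t; x'(t) = 1 − φ(x(t)) − g at every t with ψ(t) > α, and x'(t) = −φ(x(t)) − g at every t with ψ(t) < α. Let M = {t ∈ [0,T] : ψ(t) = α} and suppose there exists x₁ ∈ ℝ with x(t) = x₁ for all t ∈ M. Then M is order-connected: whenever t', t'' ∈ M and t' ≤ s ≤ t'', one has s ∈ M. (Hence M is empty, a single point, or a segment.) -/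
open Set Filter Topology


private lemma deriv_eq_lim_right (f G : ℝ → ℝ) {a b d ℓ : ℝ} (hab : a < b)
    (hf : HasDerivAt f d a)
    (hc : ContinuousOn f (Set.Ico a b))
    (hd : ∀ t ∈ Set.Ioo a b, HasDerivAt f (G t) t)
    (hG : Tendsto G (𝓝[>] a) (𝓝 ℓ)) : d = ℓ := by
  have h1 : Tendsto (slope f a) (𝓝[>] a) (𝓝 d) :=
    (hasDerivAt_iff_tendsto_slope.1 hf).mono_left
      (nhdsWithin_mono a (fun t ht => ne_of_gt ht))
  have h2 : Tendsto (slope f a) (𝓝[>] a) (𝓝 ℓ) := by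
    rw [Metric.tendsto_nhds]
    intro ε hε
    have hev := (Metric.tendsto_nhds.1 hG) ε hε
    rw [eventually_iff, mem_nhdsGT_iff_exists_Ioo_subset] at hev
    obtain ⟨u, hu, hsub⟩ := hev
    have hδ : a < min u b := lt_min hu hab
    filter_upwards [Ioo_mem_nhdsGT_of_mem (⟨le_refl a, hδ⟩ : a ∈ Set.Ico a (min u b))]
      with t ht
    have htb : t < b := lt_of_lt_of_le ht.2 (min_le_right u b)
    have htu : t < u := lt_of_lt_of_le ht.2 (min_le_left u b)
    obtain ⟨c, hc1, hc2⟩ := exists_hasDerivAt_eq_slope f G ht.1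
      (hc.mono (fun z hz => ⟨hz.1, lt_of_le_of_lt hz.2 htb⟩))
      (fun z hz => hd z ⟨hz.1, hz.2.trans htb⟩)
    have hslope : slope f a t = G c := by rw [slope_def_field, hc2]
    rw [hslope]
    exact hsub ⟨hc1.1, hc1.2.trans htu⟩
  exact tendsto_nhds_unique h1 h2

private lemma deriv_eq_lim_left (f G : ℝ → ℝ) {a b d ℓ : ℝ} (hab : a < b)
    (hf : HasDerivAt f d b)
    (hc : ContinuousOn f (Set.Ioc a b))
    (hd : ∀ t ∈ Set.Ioo a b, HasDerivAt f (G t) t)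
    (hG : Tendsto G (𝓝[<] b) (𝓝 ℓ)) : d = ℓ := by
  have h1 : Tendsto (slope f b) (𝓝[<] b) (𝓝 d) :=
    (hasDerivAt_iff_tendsto_slope.1 hf).mono_left
      (nhdsWithin_mono b (fun t ht => ne_of_lt ht))
  have h2 : Tendsto (slope f b) (𝓝[<] b) (𝓝 ℓ) := by
    rw [Metric.tendsto_nhds]
    intro ε hε
    have hev := (Metric.tendsto_nhds.1 hG) ε hε
    rw [eventually_iff, mem_nhdsLT_iff_exists_Ioo_subset] at hev
    obtain ⟨u, hu, hsub⟩ := hev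
    have hδ : max u a < b := max_lt hu hab
    filter_upwards [Ioo_mem_nhdsLT_of_mem (⟨hδ, le_refl b⟩ : b ∈ Set.Ioc (max u a) b)]
      with t ht
    have hta : a < t := lt_of_le_of_lt (le_max_right u a) ht.1
    have htu : u < t := lt_of_le_of_lt (le_max_left u a) ht.1
    obtain ⟨c, hc1, hc2⟩ := exists_hasDerivAt_eq_slope f G ht.2
      (hc.mono (fun z hz => ⟨lt_of_lt_of_le hta hz.1, hz.2⟩))
      (fun z hz => hd z ⟨hta.trans hz.1, hz.2⟩)
    have hslope : slope f b t = G c := by rw [slope_comm, slope_def_field, hc2]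
    rw [hslope]
    exact hsub ⟨htu.trans hc1.1, hc1.2⟩
  exact tendsto_nhds_unique h1 h2

private lemma const_of_deriv_zero (F : ℝ → ℝ) {a b : ℝ}
    (hF : ∀ t ∈ Set.Ioo a b, HasDerivAt F 0 t) :
    ∀ u ∈ Set.Ioo a b, ∀ v ∈ Set.Ioo a b, F u = F v := by
  have key : ∀ u ∈ Set.Ioo a b, ∀ v ∈ Set.Ioo a b, u ≤ v → F v = F u := by
    intro u hu v hv huv
    have hcont : ContinuousOn F (Set.Icc u v) := fun t ht =>
      ((hF t ⟨lt_of_lt_of_le hu.1 ht.1, lt_of_le_of_lt ht.2 hv.2⟩).continuousAt).continuousWithinAt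
    exact constant_of_has_deriv_right_zero hcont
      (fun t ht => ((hF t ⟨lt_of_lt_of_le hu.1 ht.1, lt_of_lt_of_le ht.2 hv.2.le⟩).hasDerivWithinAt))
      v ⟨huv, le_refl v⟩
  intro u hu v hv
  rcases le_total u v with h | h
  · exact (key u hu v hv h).symm
  · exact key v hv u hu h


private lemma key_convexity (φ : ℝ → ℝ)
    (hφdiff : Differentiable ℝ φ)
    (hφC2 : ContDiffOn ℝ 2 φ {(0:ℝ)}ᶜ)
    (hφ''neg : ∀ y : ℝ, y < 0 → deriv (deriv φ) y < 0)
    (hφ''pos : ∀ y : ℝ, 0 < y → 0 < deriv (deriv φ) y)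
    (α C p q : ℝ) (hα : 0 < α) (hpq : p < q)
    (hp : p - α * φ p = C) (hq : q - α * φ q = C)
    (hneg : ∀ ξ ∈ Set.Ioo p q, ξ - α * φ ξ < C)
    (htan : p < 0 → α * deriv φ p = 1) : False := by
  set h : ℝ → ℝ := fun ξ => ξ - α * φ ξ - C with hh
  have hdiff : Differentiable ℝ h :=
    (differentiable_id.sub (hφdiff.const_mul α)).sub_const C
  have hDh : ∀ ξ : ℝ, HasDerivAt h (1 - α * deriv φ ξ) ξ := by
    intro ξ
    exact ((hasDerivAt_id ξ).sub (((hφdiff ξ).hasDerivAt).const_mul α)).sub_const C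
  have hderiv : ∀ ξ : ℝ, deriv h ξ = 1 - α * deriv φ ξ := fun ξ => (hDh ξ).deriv
  have contDiff1 : ContDiffOn ℝ 1 (deriv φ) {(0:ℝ)}ᶜ :=
    hφC2.deriv_of_isOpen isOpen_compl_singleton (by norm_num)
  have hφ'diff : ∀ ξ : ℝ, ξ ≠ 0 → DifferentiableAt ℝ (deriv φ) ξ := fun ξ h0 =>
    ((contDiff1.differentiableOn one_ne_zero).differentiableAt
      (isOpen_compl_singleton.mem_nhds h0))
  have hD2 : ∀ ξ : ℝ, ξ ≠ 0 → deriv (deriv h) ξ = -(α * deriv (deriv φ) ξ) := by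
    intro ξ h0
    have h1 : HasDerivAt (fun z => 1 - α * deriv φ z) (0 - α * deriv (deriv φ) ξ) ξ :=
      (hasDerivAt_const ξ (1:ℝ)).sub (((hφ'diff ξ h0).hasDerivAt).const_mul α)
    have h2 : deriv h = fun z => 1 - α * deriv φ z := funext hderiv
    rw [h2, h1.deriv]; ring
  have hp0 : h p = 0 := by simp [hh]; linarith
  have hq0 : h q = 0 := by simp [hh]; linarith
  rcases lt_or_ge p 0 with hpneg | hppos
  · -- tangent case
    have hp1 : α * deriv φ p = 1 := htan hpneg
    set r : ℝ := (p + min 0 q) / 2 with hr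
    have hpm : p < min 0 q := lt_min hpneg hpq
    have hpr : p < r := by simp only [hr]; linarith
    have hr0 : r < 0 := by
      have : r < min 0 q := by simp only [hr]; linarith
      exact lt_of_lt_of_le this (min_le_left 0 q)
    have hrq : r < q := by
      have : r < min 0 q := by simp only [hr]; linarith
      exact lt_of_lt_of_le this (min_le_right 0 q)
    -- deriv φ strictly decreasing on Icc p r
    have hanti : StrictAntiOn (deriv φ) (Set.Icc p r) := by
      apply strictAntiOn_of_deriv_neg (convex_Icc p r)
      · exact contDiff1.continuousOn.mono (fun z hz => ne_of_lt (lt_of_le_of_lt hz.2 hr0))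
      · intro z hz
        rw [interior_Icc] at hz
        exact hφ''neg z (hz.2.trans hr0)
    have hmono : StrictMonoOn h (Set.Icc p r) := by
      apply strictMonoOn_of_deriv_pos (convex_Icc p r) hdiff.continuous.continuousOn
      intro z hz
      rw [interior_Icc] at hz
      rw [hderiv]
      have : deriv φ z < deriv φ p :=
        hanti ⟨le_refl p, hpr.le⟩ ⟨hz.1.le, hz.2.le⟩ hz.1
      nlinarith
    have h1 : h p < h r := hmono ⟨le_refl p, hpr.le⟩ ⟨hpr.le, le_refl r⟩ hpr
    have h2 : h r < 0 := by
      have := hneg r ⟨hpr, hrq⟩; simp only [hh]; linarith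
    rw [hp0] at h1; linarith
  · -- concavity case
    have hcc : StrictConcaveOn ℝ (Set.Icc p q) h := by
      apply strictConcaveOn_of_deriv2_neg (convex_Icc p q) hdiff.continuous.continuousOn
      intro z hz
      rw [interior_Icc] at hz
      have hz0 : z ≠ 0 := ne_of_gt (lt_of_le_of_lt hppos hz.1)
      have : deriv^[2] h z = deriv (deriv h) z := rfl
      rw [this, hD2 z hz0]
      have := hφ''pos z (lt_of_le_of_lt hppos hz.1)
      nlinarith
    have := hcc.2 (⟨le_refl p, hpq.le⟩ : p ∈ Set.Icc p q) ⟨hpq.le, le_refl q⟩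
      (ne_of_lt hpq) (by norm_num : (0:ℝ) < 1/2) (by norm_num : (0:ℝ) < 1/2) (by norm_num)
    rw [hp0, hq0] at this
    simp only [smul_eq_mul, mul_zero, add_zero] at this
    have hm : (1:ℝ)/2 * p + 1/2 * q ∈ Set.Ioo p q := by
      constructor <;> linarith
    have h2 := hneg _ hm
    simp only [hh] at this
    linarith

private lemma core_lemma (φ : ℝ → ℝ) (g w ε α xmin xmax : ℝ)
    (hφdiff : Differentiable ℝ φ)
    (hφC2 : ContDiffOn ℝ 2 φ {(0:ℝ)}ᶜ)
    (hφ''neg : ∀ y : ℝ, y < 0 → deriv (deriv φ) y < 0)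
    (hφ''pos : ∀ y : ℝ, 0 < y → 0 < deriv (deriv φ) y)
    (hα : 0 < α) (hε : ε = 1 ∨ ε = -1)
    (a b : ℝ) (hab : a < b) (x ψ : ℝ → ℝ)
    (hψd : ∀ t ∈ Set.Icc a b, HasDerivAt ψ (-1 + ψ t * deriv φ (x t)) t)
    (hψa : ψ a = α) (hψb : ψ b = α)
    (hxab : x a = x b)
    (hxd : ∀ t ∈ Set.Ioo a b, HasDerivAt x (w - φ (x t) - g) t)
    (hbd : ∀ t ∈ Set.Ioo a b, x t ∈ Set.Icc xmin xmax)
    (hv : ∀ t ∈ Set.Ioo a b, 0 < ε * (w - φ (x t) - g))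
    (hsign : ∀ t ∈ Set.Ioo a b, 0 < ε * (ψ t - α)) : False := by
  have hεne : ε ≠ 0 := by rcases hε with h | h <;> rw [h] <;> norm_num
  have hm₀ : (a + b) / 2 ∈ Set.Ioo a b := ⟨by linarith, by linarith⟩
  have xcont : ContinuousOn x (Set.Ioo a b) := fun t ht =>
    ((hxd t ht).differentiableAt.continuousAt).continuousWithinAt
  have contDiff1 : ContDiffOn ℝ 1 (deriv φ) {(0:ℝ)}ᶜ :=
    hφC2.deriv_of_isOpen isOpen_compl_singleton (by norm_num)
  have himg : x '' Set.Ioo a b ⊆ Set.Icc xmin xmax := by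
    rintro _ ⟨t, ht, rfl⟩; exact hbd t ht
  have hbddA : BddAbove (x '' Set.Ioo a b) := bddAbove_Icc.mono himg
  have hbddB : BddBelow (x '' Set.Ioo a b) := bddBelow_Icc.mono himg
  have hSne : (x '' Set.Ioo a b).Nonempty := ⟨x ((a+b)/2), mem_image_of_mem x hm₀⟩
  -- product positivity
  have hprod : ∀ t ∈ Set.Ioo a b, 0 < (ψ t - α) * (w - φ (x t) - g) := by
    intro t ht
    have h1 := hsign t ht
    have h2 := hv t ht
    rcases hε with h | h <;> rw [h] at h1 h2
    · rw [one_mul] at h1 h2; exact mul_pos h1 h2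
    · rw [neg_one_mul, neg_pos] at h1 h2; exact mul_pos_of_neg_of_neg h1 h2
  -- monotonicity package
  have ht₁ : (3*a + b)/4 ∈ Set.Ioo a b := ⟨by linarith, by linarith⟩
  have ht₂ : (a + 3*b)/4 ∈ Set.Ioo a b := ⟨by linarith, by linarith⟩
  have ht₁₂ : (3*a + b)/4 < (a + 3*b)/4 := by linarith
  have hsplit : ((Tendsto x (𝓝[>] a) (𝓝 (sInf (x '' Set.Ioo a b))) ∧
      Tendsto x (𝓝[<] b) (𝓝 (sSup (x '' Set.Ioo a b)))) ∨
      (Tendsto x (𝓝[>] a) (𝓝 (sSup (x '' Set.Ioo a b))) ∧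
      Tendsto x (𝓝[<] b) (𝓝 (sInf (x '' Set.Ioo a b))))) ∧
      sInf (x '' Set.Ioo a b) < sSup (x '' Set.Ioo a b) := by
    have hle₁ := csInf_le hbddB (mem_image_of_mem x ht₁)
    have hle₂ := csInf_le hbddB (mem_image_of_mem x ht₂)
    have hge₁ := le_csSup hbddA (mem_image_of_mem x ht₁)
    have hge₂ := le_csSup hbddA (mem_image_of_mem x ht₂)
    rcases hε with h | h
    · have hsm : StrictMonoOn x (Set.Ioo a b) := by
        apply strictMonoOn_of_deriv_pos (convex_Ioo a b) xcont
        intro t ht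
        rw [interior_Ioo] at ht
        rw [(hxd t ht).deriv]
        have := hv t ht; rw [h, one_mul] at this; exact this
      refine ⟨Or.inl ⟨?_, ?_⟩, ?_⟩
      · exact MonotoneOn.tendsto_nhdsWithin_Ioo_right ⟨_, hm₀⟩ hsm.monotoneOn hbddB
      · exact MonotoneOn.tendsto_nhdsWithin_Ioo_left ⟨_, hm₀⟩ hsm.monotoneOn hbddA
      · have h12 : x ((3*a + b)/4) < x ((a + 3*b)/4) := hsm ht₁ ht₂ ht₁₂
        linarith
    · have hsm : StrictAntiOn x (Set.Ioo a b) := by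
        apply strictAntiOn_of_deriv_neg (convex_Ioo a b) xcont
        intro t ht
        rw [interior_Ioo] at ht
        rw [(hxd t ht).deriv]
        have := hv t ht; rw [h, neg_one_mul, neg_pos] at this; exact this
      refine ⟨Or.inr ⟨?_, ?_⟩, ?_⟩
      · exact AntitoneOn.tendsto_nhdsWithin_Ioo_right ⟨_, hm₀⟩ hsm.antitoneOn hbddA
      · exact AntitoneOn.tendsto_nhdsWithin_Ioo_left ⟨_, hm₀⟩ hsm.antitoneOn hbddB
      · have h12 : x ((a + 3*b)/4) < x ((3*a + b)/4) := hsm ht₁ ht₂ ht₁₂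
        linarith
  obtain ⟨hsplit, hpq⟩ := hsplit
  -- coverage
  have hcover : ∀ ξ ∈ Set.Ioo (sInf (x '' Set.Ioo a b)) (sSup (x '' Set.Ioo a b)),
      ∃ t ∈ Set.Ioo a b, x t = ξ := by
    intro ξ hξ
    have hconn : (x '' Set.Ioo a b).OrdConnected :=
      ((isPreconnected_Ioo).image x xcont).ordConnected
    obtain ⟨u, hu, hu'⟩ := exists_lt_of_csInf_lt hSne hξ.1
    obtain ⟨v', hv', hv''⟩ := exists_lt_of_lt_csSup hSne hξ.2
    have := hconn.out hu hv' ⟨hu'.le, hv''.le⟩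
    obtain ⟨t, ht, ht'⟩ := this; exact ⟨t, ht, ht'⟩
  -- ψ tendsto at endpoints
  have hψconta : Tendsto ψ (𝓝[>] a) (𝓝 α) := by
    have h0 : Tendsto ψ (𝓝 a) (𝓝 (ψ a)) := (hψd a ⟨le_refl a, hab.le⟩).continuousAt
    rw [hψa] at h0
    exact h0.mono_left nhdsWithin_le_nhds
  have hψcontb : Tendsto ψ (𝓝[<] b) (𝓝 α) := by
    have h0 : Tendsto ψ (𝓝 b) (𝓝 (ψ b)) := (hψd b ⟨hab.le, le_refl b⟩).continuousAt
    rw [hψb] at h0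
    exact h0.mono_left nhdsWithin_le_nhds
  -- Hamiltonian
  have hF0 : ∀ t ∈ Set.Ioo a b,
      HasDerivAt (fun u => ψ u * (w - φ (x u) - g) + x u) 0 t := by
    intro t ht
    have hx' := hxd t ht
    have hcomp : HasDerivAt (fun u => φ (x u)) (deriv φ (x t) * (w - φ (x t) - g)) t :=
      (hφdiff (x t)).hasDerivAt.comp t hx'
    have hinner : HasDerivAt (fun u => w - φ (x u) - g)
        (0 - deriv φ (x t) * (w - φ (x t) - g)) t :=
      ((hasDerivAt_const t w).sub hcomp).sub_const g
    have hmul := (hψd t ⟨ht.1.le, ht.2.le⟩).mul hinner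
    have := hmul.add hx'
    exact this.congr_deriv (by ring)
  have hFc : ∀ t ∈ Set.Ioo a b, ψ t * (w - φ (x t) - g) + x t =
      ψ ((a+b)/2) * (w - φ (x ((a+b)/2)) - g) + x ((a+b)/2) :=
    fun t ht => const_of_deriv_zero _ hF0 t ht _ hm₀
  set C' : ℝ := ψ ((a+b)/2) * (w - φ (x ((a+b)/2)) - g) + x ((a+b)/2) with hC'
  -- endpoint limit equations
  have hCend_a : ∀ pa : ℝ, Tendsto x (𝓝[>] a) (𝓝 pa) →
      α * (w - φ pa - g) + pa = C' := by
    intro pa hpa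
    have hφx : Tendsto (fun t => φ (x t)) (𝓝[>] a) (𝓝 (φ pa)) :=
      ((hφdiff.continuous.continuousAt).tendsto).comp hpa
    have hT : Tendsto (fun t => ψ t * (w - φ (x t) - g) + x t) (𝓝[>] a)
        (𝓝 (α * (w - φ pa - g) + pa)) :=
      (hψconta.mul ((tendsto_const_nhds.sub hφx).sub tendsto_const_nhds)).add hpa
    have hT2 : Tendsto (fun t => ψ t * (w - φ (x t) - g) + x t) (𝓝[>] a) (𝓝 C') := by
      apply Tendsto.congr' _ (tendsto_const_nhds : Tendsto (fun _ : ℝ => C') (𝓝[>] a) (𝓝 C'))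
      filter_upwards [Ioo_mem_nhdsGT_of_mem (⟨le_refl a, hab⟩ : a ∈ Set.Ico a b)] with t ht
      exact (hFc t ht).symm
    exact tendsto_nhds_unique hT hT2
  have hCend_b : ∀ pb : ℝ, Tendsto x (𝓝[<] b) (𝓝 pb) →
      α * (w - φ pb - g) + pb = C' := by
    intro pb hpb
    have hφx : Tendsto (fun t => φ (x t)) (𝓝[<] b) (𝓝 (φ pb)) :=
      ((hφdiff.continuous.continuousAt).tendsto).comp hpb
    have hT : Tendsto (fun t => ψ t * (w - φ (x t) - g) + x t) (𝓝[<] b)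
        (𝓝 (α * (w - φ pb - g) + pb)) :=
      (hψcontb.mul ((tendsto_const_nhds.sub hφx).sub tendsto_const_nhds)).add hpb
    have hT2 : Tendsto (fun t => ψ t * (w - φ (x t) - g) + x t) (𝓝[<] b) (𝓝 C') := by
      apply Tendsto.congr' _ (tendsto_const_nhds : Tendsto (fun _ : ℝ => C') (𝓝[<] b) (𝓝 C'))
      filter_upwards [Ioo_mem_nhdsLT_of_mem (⟨hab, le_refl b⟩ : b ∈ Set.Ioc a b)] with t ht
      exact (hFc t ht).symm
    exact tendsto_nhds_unique hT hT2
  -- step A : common derivative of ψ at a and b is zero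
  have hda : HasDerivAt ψ (-1 + α * deriv φ (x a)) a := by
    have := hψd a ⟨le_refl a, hab.le⟩; rwa [hψa] at this
  have hdb : HasDerivAt ψ (-1 + α * deriv φ (x a)) b := by
    have := hψd b ⟨hab.le, le_refl b⟩; rwa [hψb, ← hxab] at this
  have hεd_nonneg : 0 ≤ ε * (-1 + α * deriv φ (x a)) := by
    have hslope : Tendsto (fun t => ε * slope ψ a t) (𝓝[>] a)
        (𝓝 (ε * (-1 + α * deriv φ (x a)))) :=
      ((hasDerivAt_iff_tendsto_slope.1 hda).mono_left
        (nhdsWithin_mono a (fun t ht => ne_of_gt ht))).const_mul ε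
    apply ge_of_tendsto hslope
    filter_upwards [Ioo_mem_nhdsGT_of_mem (⟨le_refl a, hab⟩ : a ∈ Set.Ico a b)] with t ht
    have h1 := hsign t ht
    have h2 : ε * slope ψ a t = ε * (ψ t - α) / (t - a) := by
      rw [slope_def_field, hψa]; ring
    rw [h2]
    exact le_of_lt (div_pos h1 (sub_pos.2 ht.1))
  have hεd_nonpos : ε * (-1 + α * deriv φ (x a)) ≤ 0 := by
    have hslope : Tendsto (fun t => ε * slope ψ b t) (𝓝[<] b)
        (𝓝 (ε * (-1 + α * deriv φ (x a)))) :=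
      ((hasDerivAt_iff_tendsto_slope.1 hdb).mono_left
        (nhdsWithin_mono b (fun t ht => ne_of_lt ht))).const_mul ε
    apply le_of_tendsto hslope
    filter_upwards [Ioo_mem_nhdsLT_of_mem (⟨hab, le_refl b⟩ : b ∈ Set.Ioc a b)] with t ht
    have h1 := hsign t ht
    have h2 : ε * slope ψ b t = ε * (ψ t - α) / (t - b) := by
      rw [slope_def_field, hψb]; ring
    rw [h2]
    exact le_of_lt (div_neg_of_pos_of_neg h1 (sub_neg.2 ht.2))
  have hd0 : -1 + α * deriv φ (x a) = 0 := by
    have h0 : ε * (-1 + α * deriv φ (x a)) = 0 := le_antisymm hεd_nonpos hεd_nonneg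
    rcases mul_eq_zero.1 h0 with h | h
    · exact absurd h hεne
    · exact h
  -- step C : derivative limits at endpoints
  have hlim_a : ∀ pa : ℝ, Tendsto x (𝓝[>] a) (𝓝 pa) → pa ≠ 0 → α * deriv φ pa = 1 := by
    intro pa hpa hpa0
    have hcφ' : ContinuousAt (deriv φ) pa :=
      (contDiff1.continuousOn).continuousAt (isOpen_compl_singleton.mem_nhds hpa0)
    have hG : Tendsto (fun t => -1 + ψ t * deriv φ (x t)) (𝓝[>] a)
        (𝓝 (-1 + α * deriv φ pa)) :=
      tendsto_const_nhds.add (hψconta.mul (hcφ'.tendsto.comp hpa))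
    have heq := deriv_eq_lim_right ψ (fun t => -1 + ψ t * deriv φ (x t)) hab hda
      (fun t ht => ((hψd t ⟨ht.1, ht.2.le⟩).continuousAt).continuousWithinAt)
      (fun t ht => hψd t ⟨ht.1.le, ht.2.le⟩) hG
    linarith [hd0, heq]
  have hlim_b : ∀ pb : ℝ, Tendsto x (𝓝[<] b) (𝓝 pb) → pb ≠ 0 → α * deriv φ pb = 1 := by
    intro pb hpb hpb0
    have hcφ' : ContinuousAt (deriv φ) pb :=
      (contDiff1.continuousOn).continuousAt (isOpen_compl_singleton.mem_nhds hpb0)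
    have hG : Tendsto (fun t => -1 + ψ t * deriv φ (x t)) (𝓝[<] b)
        (𝓝 (-1 + α * deriv φ pb)) :=
      tendsto_const_nhds.add (hψcontb.mul (hcφ'.tendsto.comp hpb))
    have heq := deriv_eq_lim_left ψ (fun t => -1 + ψ t * deriv φ (x t)) hab hdb
      (fun t ht => ((hψd t ⟨ht.1.le, ht.2⟩).continuousAt).continuousWithinAt)
      (fun t ht => hψd t ⟨ht.1.le, ht.2.le⟩) hG
    linarith [hd0, heq]
  -- conclude with key_convexity
  have hnegkey : ∀ ξ ∈ Set.Ioo (sInf (x '' Set.Ioo a b)) (sSup (x '' Set.Ioo a b)),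
      ξ - α * φ ξ < C' - α * w + α * g := by
    intro ξ hξ
    obtain ⟨t, ht, rfl⟩ := hcover ξ hξ
    have h1 := hFc t ht
    have h2 := hprod t ht
    nlinarith [h1, h2]
  rcases hsplit with ⟨hta, htb⟩ | ⟨hta, htb⟩
  · exact key_convexity φ hφdiff hφC2 hφ''neg hφ''pos α (C' - α * w + α * g) _ _ hα hpq
      (by have := hCend_a _ hta; linarith)
      (by have := hCend_b _ htb; linarith)
      hnegkey
      (fun hpneg => hlim_a _ hta (ne_of_lt hpneg))
  · exact key_convexity φ hφdiff hφC2 hφ''neg hφ''pos α (C' - α * w + α * g) _ _ hα hpq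
      (by have := hCend_b _ htb; linarith)
      (by have := hCend_a _ hta; linarith)
      hnegkey
      (fun hpneg => hlim_b _ htb (ne_of_lt hpneg))


/-- If the velocity takes a single value on the switching set
    M = {t : ψ t = α}, then M is order-connected (a point or a segment). -/
theorem stmt_7 (φ : ℝ → ℝ) (g xmin xmax : ℝ)
    (hφ0 : φ 0 = 0)
    (hφdiff : Differentiable ℝ φ)
    (hφ' : ∀ y : ℝ, 0 < deriv φ y)
    (hφC2 : ContDiffOn ℝ 2 φ {(0:ℝ)}ᶜ)
    (hφ''neg : ∀ y : ℝ, y < 0 → deriv (deriv φ) y < 0)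
    (hφ''pos : ∀ y : ℝ, 0 < y → 0 < deriv (deriv φ) y)
    (hg0 : 0 < g) (hg1 : g < 1)
    (hxminneg : xmin < 0) (hxmaxpos : 0 < xmax)
    (hmin : φ xmin = -g) (hmax : φ xmax = 1 - g)
    (T α : ℝ) (hT : 0 < T) (hα : 0 < α)
    (x ψ : ℝ → ℝ)
    (hψ : ∀ t ∈ Set.Icc (0:ℝ) T, HasDerivAt ψ (-1 + ψ t * deriv φ (x t)) t)
    (hxrange : ∀ t ∈ Set.Icc (0:ℝ) T, x t ∈ Set.Ioo xmin xmax)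
    (hx1 : ∀ t ∈ Set.Icc (0:ℝ) T, α < ψ t → HasDerivAt x (1 - φ (x t) - g) t)
    (hx0 : ∀ t ∈ Set.Icc (0:ℝ) T, ψ t < α → HasDerivAt x (-(φ (x t)) - g) t)
    (x₁ : ℝ)
    (hM : ∀ t ∈ {t ∈ Set.Icc (0:ℝ) T | ψ t = α}, x t = x₁) :
    ∀ t' ∈ {t ∈ Set.Icc (0:ℝ) T | ψ t = α},
      ∀ t'' ∈ {t ∈ Set.Icc (0:ℝ) T | ψ t = α},
        ∀ s : ℝ, t' ≤ s → s ≤ t'' → s ∈ {t ∈ Set.Icc (0:ℝ) T | ψ t = α} := by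
  intro t' ht' t'' ht'' s hs1 hs2
  obtain ⟨ht'I, ht'ψ⟩ := ht'
  obtain ⟨ht''I, ht''ψ⟩ := ht''
  have hsI : s ∈ Set.Icc (0:ℝ) T := ⟨le_trans ht'I.1 hs1, le_trans hs2 ht''I.2⟩
  refine ⟨hsI, ?_⟩
  by_contra hsψ
  have hψc : ∀ t ∈ Set.Icc (0:ℝ) T, ContinuousAt ψ t := fun t ht => (hψ t ht).continuousAt
  -- the point a : last time before s where ψ = α
  set A := {t | t ∈ Set.Icc t' s ∧ ψ t = α} with hA
  have hAsub : A ⊆ Set.Icc (0:ℝ) T := fun t ht =>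
    ⟨le_trans ht'I.1 ht.1.1, le_trans ht.1.2 hsI.2⟩
  have hAclosed : IsClosed A := by
    have hAeq : A = Set.Icc t' s ∩ ψ ⁻¹' {α} := by
      ext t; simp [hA, Set.mem_setOf_eq]
    rw [hAeq]
    apply ContinuousOn.preimage_isClosed_of_isClosed ?_ isClosed_Icc isClosed_singleton
    exact fun t ht =>
      (hψc t ⟨le_trans ht'I.1 ht.1, le_trans ht.2 hsI.2⟩).continuousWithinAt
  have hAne : A.Nonempty := ⟨t', ⟨⟨le_refl t', hs1⟩, ht'ψ⟩⟩
  have hAbdd : BddAbove A := ⟨s, fun t ht => ht.1.2⟩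
  have haA : sSup A ∈ A := hAclosed.csSup_mem hAne hAbdd
  set a := sSup A with ha
  have haI : a ∈ Set.Icc (0:ℝ) T := hAsub haA
  have haψ : ψ a = α := haA.2
  have hasne : a < s := lt_of_le_of_ne haA.1.2 (fun h => hsψ (h ▸ haψ))
  have hnot_a : ∀ u, a < u → u ≤ s → ψ u ≠ α := by
    intro u hau hus h
    have hu : u ∈ A := ⟨⟨le_trans haA.1.1 hau.le, hus⟩, h⟩
    exact absurd (le_csSup hAbdd hu) (not_le.2 hau)
  -- the point b : first time after s where ψ = α
  set B := {t | t ∈ Set.Icc s t'' ∧ ψ t = α} with hB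
  have hBsub : B ⊆ Set.Icc (0:ℝ) T := fun t ht =>
    ⟨le_trans hsI.1 ht.1.1, le_trans ht.1.2 ht''I.2⟩
  have hBclosed : IsClosed B := by
    have hBeq : B = Set.Icc s t'' ∩ ψ ⁻¹' {α} := by
      ext t; simp [hB, Set.mem_setOf_eq]
    rw [hBeq]
    apply ContinuousOn.preimage_isClosed_of_isClosed ?_ isClosed_Icc isClosed_singleton
    exact fun t ht =>
      (hψc t ⟨le_trans hsI.1 ht.1, le_trans ht.2 ht''I.2⟩).continuousWithinAt
  have hBne : B.Nonempty := ⟨t'', ⟨⟨hs2, le_refl t''⟩, ht''ψ⟩⟩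
  have hBbdd : BddBelow B := ⟨s, fun t ht => ht.1.1⟩
  have hbB : sInf B ∈ B := hBclosed.csInf_mem hBne hBbdd
  set b := sInf B with hb
  have hbI : b ∈ Set.Icc (0:ℝ) T := hBsub hbB
  have hbψ : ψ b = α := hbB.2
  have hsbne : s < b := lt_of_le_of_ne hbB.1.1 (fun h => hsψ (h.symm ▸ hbψ))
  have hnot_b : ∀ u, s ≤ u → u < b → ψ u ≠ α := by
    intro u hsu hub h
    have hu : u ∈ B := ⟨⟨hsu, le_trans hub.le hbB.1.2⟩, h⟩
    exact absurd (csInf_le hBbdd hu) (not_le.2 hub)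
  have hab : a < b := hasne.trans hsbne
  have hIccsub : Set.Icc a b ⊆ Set.Icc (0:ℝ) T := fun t ht =>
    ⟨le_trans haI.1 ht.1, le_trans ht.2 hbI.2⟩
  have hIoosub : Set.Ioo a b ⊆ Set.Icc (0:ℝ) T := fun t ht =>
    hIccsub ⟨ht.1.le, ht.2.le⟩
  have hne : ∀ u ∈ Set.Ioo a b, ψ u ≠ α := by
    intro u hu
    rcases le_or_gt u s with h | h
    · exact hnot_a u hu.1 h
    · exact hnot_b u h.le hu.2
  have hsIoo : s ∈ Set.Ioo a b := ⟨hasne, hsbne⟩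
  -- no sign change of ψ - α on (a,b)
  have hIVT : ∀ u ∈ Set.Ioo a b, ∀ v ∈ Set.Ioo a b, ψ u < α → α < ψ v → False := by
    intro u hu v hv huα hvα
    rcases lt_trichotomy u v with h | h | h
    · have hcont : ContinuousOn ψ (Set.Icc u v) := fun t ht =>
        (hψc t (hIoosub ⟨lt_of_lt_of_le hu.1 ht.1, lt_of_le_of_lt ht.2 hv.2⟩)).continuousWithinAt
      obtain ⟨c, hc, hcψ⟩ := intermediate_value_Ioo h.le hcont ⟨huα, hvα⟩
      exact hne c ⟨hu.1.trans hc.1, hc.2.trans hv.2⟩ hcψ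
    · rw [h] at huα; linarith
    · have hcont : ContinuousOn ψ (Set.Icc v u) := fun t ht =>
        (hψc t (hIoosub ⟨lt_of_lt_of_le hv.1 ht.1, lt_of_le_of_lt ht.2 hu.2⟩)).continuousWithinAt
      obtain ⟨c, hc, hcψ⟩ := intermediate_value_Ioo' h.le hcont ⟨huα, hvα⟩
      exact hne c ⟨hv.1.trans hc.1, hc.2.trans hu.2⟩ hcψ
  -- data common to the two cases
  have hψd' : ∀ t ∈ Set.Icc a b, HasDerivAt ψ (-1 + ψ t * deriv φ (x t)) t :=
    fun t ht => hψ t (hIccsub ht)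
  have hxab : x a = x b := by
    rw [hM a ⟨haI, haψ⟩, hM b ⟨hbI, hbψ⟩]
  have hbd : ∀ t ∈ Set.Ioo a b, x t ∈ Set.Icc xmin xmax := fun t ht =>
    ⟨(hxrange t (hIoosub ht)).1.le, (hxrange t (hIoosub ht)).2.le⟩
  have hφmono : StrictMono φ := strictMono_of_deriv_pos hφ'
  rcases lt_or_gt_of_ne hsψ with hcase | hcase
  · -- ψ < α throughout (a,b)
    have hlt : ∀ u ∈ Set.Ioo a b, ψ u < α := by
      intro u hu
      by_contra hge
      push_neg at hge
      have : α < ψ u := lt_of_le_of_ne hge (fun h' => hne u hu h'.symm)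
      exact hIVT s hsIoo u hu hcase this
    apply core_lemma φ g 0 (-1) α xmin xmax hφdiff hφC2 hφ''neg hφ''pos hα
      (Or.inr rfl) a b hab x ψ hψd' haψ hbψ hxab
    · intro t ht
      have h' : (0:ℝ) - φ (x t) - g = -(φ (x t)) - g := by ring
      rw [h']
      exact hx0 t (hIoosub ht) (hlt t ht)
    · exact hbd
    · intro t ht
      have h1 : φ xmin < φ (x t) := hφmono (hxrange t (hIoosub ht)).1
      rw [hmin] at h1
      nlinarith
    · intro t ht
      have := hlt t ht
      nlinarith
  · -- ψ > α throughout (a,b)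
    have hgt : ∀ u ∈ Set.Ioo a b, α < ψ u := by
      intro u hu
      by_contra hge
      push_neg at hge
      have : ψ u < α := lt_of_le_of_ne hge (fun h' => hne u hu h')
      exact hIVT u hu s hsIoo this hcase
    apply core_lemma φ g 1 1 α xmin xmax hφdiff hφC2 hφ''neg hφ''pos hα
      (Or.inl rfl) a b hab x ψ hψd' haψ hbψ hxab
    · exact fun t ht => hx1 t (hIoosub ht) (hgt t ht)
    · exact hbd
    · intro t ht
      have h1 : φ (x t) < φ xmax := hφmono (hxrange t (hIoosub ht)).2
      rw [hmax] at h1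
      nlinarith
    · intro t ht
      have := hgt t ht
      nlinarith
end

section
/- There do not exist T > 0, α > 0, x₁ ≤ 0, differentiable functions x, ψ : [0,T] → ℝ, and an integrable function u : [0,T] → [0,1] such that: x(0) = 0; x'(t) = u(t) − φ(x(t)) − g and ψ'(t) = −1 + ψ(t)·φ'(x(t)) for all t ∈ [0,T]; ψ(T) = 0; u(t) = 1 whenever ψ(t) > α and u(t) = 0 whenever ψ(t) < α; x(t) ∈ (x_min, x_max) for all t; x(t) = x₁ for every t ∈ [0,T] with ψ(t) = α; and ∫₀ᵀ u(t) dt > 0. (In the paper's terminology: if the set X_C of velocity values attained on the switching set M = {t : ψ(t) = α} is a singleton {x₁} with x₁ ≤ 0, then the trajectory does not satisfy the Pontryagin maximum principle.) -/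
open Set Filter Topology

private lemma deriv_nonneg_of_right {f : ℝ → ℝ} {c r : ℝ} (h : HasDerivAt f c r)
    (h2 : ∀ᶠ t in 𝓝[>] r, f r ≤ f t) : 0 ≤ c := by
  have hs : Tendsto (slope f r) (𝓝[>] r) (𝓝 c) :=
    (hasDerivAt_iff_tendsto_slope.mp h).mono_left
      (nhdsWithin_mono r fun y hy => ne_of_gt hy)
  refine ge_of_tendsto hs ?_
  filter_upwards [h2, self_mem_nhdsWithin] with t ht ht'
  rw [slope_def_field]
  exact div_nonneg (sub_nonneg.mpr ht) (sub_nonneg.mpr (le_of_lt ht'))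

private lemma deriv_nonneg_of_left {f : ℝ → ℝ} {c r : ℝ} (h : HasDerivAt f c r)
    (h2 : ∀ᶠ t in 𝓝[<] r, f t ≤ f r) : 0 ≤ c := by
  have hs : Tendsto (slope f r) (𝓝[<] r) (𝓝 c) :=
    (hasDerivAt_iff_tendsto_slope.mp h).mono_left
      (nhdsWithin_mono r fun y hy => ne_of_lt hy)
  refine ge_of_tendsto hs ?_
  filter_upwards [h2, self_mem_nhdsWithin] with t ht ht'
  rw [slope_def_field]
  exact div_nonneg_iff.mpr (Or.inr ⟨sub_nonpos.mpr ht, sub_nonpos.mpr (le_of_lt ht')⟩)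

private lemma deriv_nonpos_of_right {f : ℝ → ℝ} {c r : ℝ} (h : HasDerivAt f c r)
    (h2 : ∀ᶠ t in 𝓝[>] r, f t ≤ f r) : c ≤ 0 := by
  have := deriv_nonneg_of_right h.neg (by
    filter_upwards [h2] with t ht; exact neg_le_neg ht)
  linarith

/-- On the nonpositive half-line, a concave-there `φ` has antitone derivative. -/
private lemma deriv_anti_of_concave (φ : ℝ → ℝ) (hφdiff : Differentiable ℝ φ)
    (hφC2 : ContDiffOn ℝ 2 φ {(0:ℝ)}ᶜ)
    (hφ''neg : ∀ y : ℝ, y < 0 → deriv (deriv φ) y < 0) :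
    ∀ a b : ℝ, a ≤ b → b ≤ 0 → deriv φ b ≤ deriv φ a := by
  have hopen : IsOpen ({(0:ℝ)}ᶜ : Set ℝ) := isOpen_compl_singleton
  have hC1 : ContDiffOn ℝ 1 (deriv φ) {(0:ℝ)}ᶜ := by
    have h2 : ContDiffOn ℝ ((1:ℕ) + 1) φ {(0:ℝ)}ᶜ := by exact_mod_cast hφC2
    exact ((contDiffOn_succ_iff_deriv_of_isOpen hopen).mp h2).2.2
  have hcont : ContinuousOn (deriv φ) {(0:ℝ)}ᶜ := hC1.continuousOn
  have key : ∀ a b : ℝ, a ≤ b → b < 0 → deriv φ b ≤ deriv φ a := by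
    intro a b hab hb
    rcases eq_or_lt_of_le hab with rfl | hab
    · exact le_refl _
    · have hsub : Icc a b ⊆ ({(0:ℝ)}ᶜ : Set ℝ) := by
        intro y hy
        simp only [mem_compl_iff, mem_singleton_iff]
        exact ne_of_lt (lt_of_le_of_lt hy.2 hb)
      have hanti := strictAntiOn_of_deriv_neg (convex_Icc a b) (hcont.mono hsub)
        (fun y hy => by
          rw [interior_Icc] at hy
          exact hφ''neg y (lt_of_lt_of_le hy.2 hb.le))
      exact (hanti (left_mem_Icc.mpr hab.le) (right_mem_Icc.mpr hab.le) hab).le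
  intro a b hab hb
  rcases lt_or_eq_of_le hb with hb' | rfl
  · exact key a b hab hb'
  rcases eq_or_lt_of_le hab with rfl | ha
  · exact le_refl _
  -- b = 0, a < 0 : use left slopes of φ at 0
  have hd : Tendsto (slope φ 0) (𝓝[<] (0:ℝ)) (𝓝 (deriv φ 0)) :=
    (hasDerivAt_iff_tendsto_slope.mp (hφdiff 0).hasDerivAt).mono_left
      (nhdsWithin_mono 0 fun y hy => ne_of_lt hy)
  refine le_of_tendsto hd ?_
  filter_upwards [Ioo_mem_nhdsLT ha] with y hy
  obtain ⟨ξ, hξ, hslope⟩ := exists_hasDerivAt_eq_slope φ (deriv φ) hy.2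
    (hφdiff.continuous.continuousOn) (fun z _ => (hφdiff z).hasDerivAt)
  rw [slope_def_field]
  have heq : (φ y - φ 0) / (y - 0) = (φ 0 - φ y) / (0 - y) := by
    rw [← neg_sub (φ y), ← neg_sub y, neg_div_neg_eq]
  rw [heq, ← hslope]
  exact key a ξ (hy.1.trans hξ.1).le hξ.2

/-- If the velocity on the switching set takes the single value
    x₁ ≤ 0, the trajectory does not satisfy the maximum principle. -/
theorem stmt_8 (φ : ℝ → ℝ) (g xmin xmax : ℝ)
    (hφ0 : φ 0 = 0)
    (hφdiff : Differentiable ℝ φ)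
    (hφ' : ∀ y : ℝ, 0 < deriv φ y)
    (hφC2 : ContDiffOn ℝ 2 φ {(0:ℝ)}ᶜ)
    (hφ''neg : ∀ y : ℝ, y < 0 → deriv (deriv φ) y < 0)
    (hφ''pos : ∀ y : ℝ, 0 < y → 0 < deriv (deriv φ) y)
    (hg0 : 0 < g) (hg1 : g < 1)
    (hxminneg : xmin < 0) (hxmaxpos : 0 < xmax)
    (hmin : φ xmin = -g) (hmax : φ xmax = 1 - g) :
    ¬ ∃ (T α x₁ : ℝ) (x ψ u : ℝ → ℝ),
      0 < T ∧ 0 < α ∧ x₁ ≤ 0 ∧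
      x 0 = 0 ∧
      (∀ t ∈ Set.Icc (0:ℝ) T, u t ∈ Set.Icc (0:ℝ) 1) ∧
      IntervalIntegrable u MeasureTheory.volume 0 T ∧
      (∀ t ∈ Set.Icc (0:ℝ) T, HasDerivAt x (u t - φ (x t) - g) t) ∧
      (∀ t ∈ Set.Icc (0:ℝ) T, HasDerivAt ψ (-1 + ψ t * deriv φ (x t)) t) ∧
      ψ T = 0 ∧
      (∀ t ∈ Set.Icc (0:ℝ) T, α < ψ t → u t = 1) ∧
      (∀ t ∈ Set.Icc (0:ℝ) T, ψ t < α → u t = 0) ∧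
      (∀ t ∈ Set.Icc (0:ℝ) T, x t ∈ Set.Ioo xmin xmax) ∧
      (∀ t ∈ Set.Icc (0:ℝ) T, ψ t = α → x t = x₁) ∧
      0 < ∫ t in (0:ℝ)..T, u t := by
  rintro ⟨T, α, x₁, x, ψ, u, hT, hα, hx₁, hx0, hu01, huint, hx, hψ, hψT, hu1, hu0,
    hxin, hswitch, hupos⟩
  have hφmono : StrictMono φ := strictMono_of_deriv_pos hφ'
  have hcontψ : ContinuousOn ψ (Icc 0 T) :=
    fun t ht => ((hψ t ht).continuousAt).continuousWithinAt
  have hcontx : ContinuousOn x (Icc 0 T) :=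
    fun t ht => ((hx t ht).continuousAt).continuousWithinAt
  -- the set where ψ ≥ α
  set A : Set ℝ := Icc 0 T ∩ ψ ⁻¹' (Ici α) with hA
  have hAclosed : IsClosed A :=
    hcontψ.preimage_isClosed_of_isClosed isClosed_Icc isClosed_Ici
  have hAcompact : IsCompact A :=
    isCompact_Icc.of_isClosed_subset hAclosed inter_subset_left
  have hAne : A.Nonempty := by
    by_contra hne
    rw [Set.not_nonempty_iff_eq_empty] at hne
    have hzero : Set.EqOn u (fun _ => (0:ℝ)) (Set.uIcc 0 T) := by
      intro t ht
      rw [Set.uIcc_of_le hT.le] at ht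
      refine hu0 t ht ?_
      by_contra hlt
      push_neg at hlt
      have : t ∈ A := ⟨ht, hlt⟩
      rw [hne] at this
      exact this
    rw [intervalIntegral.integral_congr hzero] at hupos
    simp at hupos
  obtain ⟨t₀, ht₀A, ht₀ub⟩ := hAcompact.exists_isGreatest hAne
  have ht₀mem : t₀ ∈ Icc 0 T := ht₀A.1
  have hψt₀ge : α ≤ ψ t₀ := ht₀A.2
  have ht₀T : t₀ < T := by
    rcases lt_or_eq_of_le ht₀mem.2 with h | h
    · exact h
    · exfalso; rw [h, hψT] at hψt₀ge; linarith
  have hlt : ∀ t, t₀ < t → t ≤ T → ψ t < α := by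
    intro t h1 h2
    by_contra h
    push_neg at h
    exact absurd (ht₀ub ⟨⟨le_trans ht₀mem.1 h1.le, h2⟩, h⟩) (not_le.mpr h1)
  have hψt₀le : ψ t₀ ≤ α := by
    refine le_of_tendsto (((hψ t₀ ht₀mem).continuousAt).tendsto.mono_left
      (nhdsWithin_le_nhds : 𝓝[>] t₀ ≤ 𝓝 t₀)) ?_
    filter_upwards [Ioc_mem_nhdsGT ht₀T] with t ht
    exact (hlt t ht.1 ht.2).le
  have hψt₀ : ψ t₀ = α := le_antisymm hψt₀le hψt₀ge
  have hxt₀ : x t₀ = x₁ := hswitch t₀ ht₀mem hψt₀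
  set c : ℝ := -1 + α * deriv φ x₁ with hc
  have hderivt₀ : HasDerivAt ψ c t₀ := by
    have := hψ t₀ ht₀mem
    rwa [hψt₀, hxt₀] at this
  -- t₀ > 0 (otherwise u = 0 a.e.)
  have ht₀pos : 0 < t₀ := by
    rcases (ht₀mem.1).eq_or_lt with h | h
    · exfalso
      have hint : ∫ t in (0:ℝ)..T, u t = 0 := by
        rw [intervalIntegral.integral_of_le hT.le]
        rw [MeasureTheory.setIntegral_congr_fun (g := fun _ => (0:ℝ)) measurableSet_Ioc ?_]
        · simp
        · intro t ht
          exact hu0 t ⟨ht.1.le, ht.2⟩ (hlt t (h ▸ ht.1) ht.2)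
      linarith
    · exact h
  rcases lt_trichotomy c 0 with hcneg | hczero | hcpos
  · -- c < 0
    by_cases hall : ∀ t ∈ Icc (0:ℝ) t₀, α ≤ ψ t
    · -- ψ ≥ α on [0,t₀] : then ψ > α on [0,t₀), x strictly increasing, x t₀ > 0
      have hgt : ∀ t, 0 ≤ t → t < t₀ → α < ψ t := by
        intro t h1 h2
        rcases lt_or_eq_of_le (hall t ⟨h1, h2.le⟩) with h | h
        · exact h
        · exfalso
          have htmem : t ∈ Icc 0 T := ⟨h1, le_trans h2.le ht₀mem.2⟩
          have hxt : x t = x₁ := hswitch t htmem h.symm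
          have hd : HasDerivAt ψ c t := by
            have := hψ t htmem
            rwa [← h, hxt] at this
          have h0c : 0 ≤ c := by
            refine deriv_nonneg_of_right hd ?_
            filter_upwards [Ioc_mem_nhdsGT h2] with s hs
            rw [← h]
            exact hall s ⟨le_trans h1 hs.1.le, hs.2⟩
          linarith
      have hmono : StrictMonoOn x (Icc 0 t₀) := by
        refine strictMonoOn_of_deriv_pos (convex_Icc _ _)
          (hcontx.mono (Icc_subset_Icc le_rfl ht₀mem.2)) ?_
        intro t ht
        rw [interior_Icc] at ht
        have htmem : t ∈ Icc 0 T := ⟨ht.1.le, le_trans ht.2.le ht₀mem.2⟩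
        rw [(hx t htmem).deriv, hu1 t htmem (hgt t ht.1.le ht.2)]
        have : φ (x t) < 1 - g := by
          rw [← hmax]; exact hφmono (hxin t htmem).2
        linarith
      have hfinal := hmono (left_mem_Icc.mpr ht₀pos.le) (right_mem_Icc.mpr ht₀pos.le) ht₀pos
      rw [hx0, hxt₀] at hfinal
      linarith
    · -- ∃ r₀ ≤ t₀ with ψ r₀ < α : first hitting of α after r₀ gives ψ' ≥ 0 there
      push_neg at hall
      obtain ⟨r₀, hr₀mem, hr₀⟩ := hall
      set S3 : Set ℝ := Icc r₀ t₀ ∩ ψ ⁻¹' (Ici α) with hS3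
      have hS3closed : IsClosed S3 :=
        (hcontψ.mono (Icc_subset_Icc hr₀mem.1 ht₀mem.2)).preimage_isClosed_of_isClosed
          isClosed_Icc isClosed_Ici
      have hS3compact : IsCompact S3 :=
        isCompact_Icc.of_isClosed_subset hS3closed inter_subset_left
      have hS3ne : S3.Nonempty := ⟨t₀, ⟨hr₀mem.2, le_rfl⟩, hψt₀ge⟩
      obtain ⟨r, hrS, hrlb⟩ := hS3compact.exists_isLeast hS3ne
      have hrmem : r ∈ Icc r₀ t₀ := hrS.1
      have hψrge : α ≤ ψ r := hrS.2
      have hr₀r : r₀ < r := by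
        rcases (hrmem.1).eq_or_lt with h | h
        · exfalso; rw [← h] at hψrge; linarith
        · exact h
      have hbefore : ∀ t, r₀ ≤ t → t < r → ψ t < α := by
        intro t h1 h2
        by_contra hh
        push_neg at hh
        exact absurd (hrlb ⟨⟨h1, le_trans h2.le hrmem.2⟩, hh⟩) (not_le.mpr h2)
      have hrmem' : r ∈ Icc 0 T := ⟨le_trans hr₀mem.1 hrmem.1, le_trans hrmem.2 ht₀mem.2⟩
      have hψrle : ψ r ≤ α := by
        refine le_of_tendsto (((hψ r hrmem').continuousAt).tendsto.mono_left
          (nhdsWithin_le_nhds : 𝓝[<] r ≤ 𝓝 r)) ?_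
        filter_upwards [Ico_mem_nhdsLT hr₀r] with s hs
        exact (hbefore s hs.1 hs.2).le
      have hψr : ψ r = α := le_antisymm hψrle hψrge
      have hxr : x r = x₁ := hswitch r hrmem' hψr
      have hd : HasDerivAt ψ c r := by
        have := hψ r hrmem'
        rwa [hψr, hxr] at this
      have h0c : 0 ≤ c := by
        refine deriv_nonneg_of_left hd ?_
        filter_upwards [Ico_mem_nhdsLT hr₀r] with s hs
        rw [hψr]
        exact (hbefore s hs.1 hs.2).le
      linarith
  · -- c = 0 : Grönwall-type argument on [t₀, t₂]
    have hφ'x₁ : deriv φ x₁ = 1 / α := by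
      have hα' : α ≠ 0 := ne_of_gt hα
      field_simp
      linarith [hczero]
    -- first time after t₀ where ψ ≤ 0
    set S2 : Set ℝ := Icc t₀ T ∩ ψ ⁻¹' (Iic 0) with hS2
    have hS2closed : IsClosed S2 :=
      (hcontψ.mono (Icc_subset_Icc ht₀mem.1 le_rfl)).preimage_isClosed_of_isClosed
        isClosed_Icc isClosed_Iic
    have hS2compact : IsCompact S2 :=
      isCompact_Icc.of_isClosed_subset hS2closed inter_subset_left
    have hS2ne : S2.Nonempty := ⟨T, ⟨⟨ht₀mem.2, le_rfl⟩, by simp [hψT]⟩⟩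
    obtain ⟨t₂, ht₂S, ht₂lb⟩ := hS2compact.exists_isLeast hS2ne
    have ht₂mem : t₂ ∈ Icc t₀ T := ht₂S.1
    have hψt₂ : ψ t₂ ≤ 0 := ht₂S.2
    have ht₀t₂ : t₀ < t₂ := by
      rcases (ht₂mem.1).eq_or_lt with h | h
      · exfalso; rw [← h, hψt₀] at hψt₂; linarith
      · exact h
    have hψpos : ∀ t, t₀ ≤ t → t < t₂ → 0 < ψ t := by
      intro t h1 h2
      by_contra h
      push_neg at h
      exact absurd (ht₂lb ⟨⟨h1, le_trans h2.le ht₂mem.2⟩, h⟩) (not_le.mpr h2)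
    have hsub : Icc t₀ t₂ ⊆ Icc 0 T := Icc_subset_Icc ht₀mem.1 ht₂mem.2
    -- x is antitone on [t₀, t₂]
    have hxanti : AntitoneOn x (Icc t₀ t₂) := by
      refine antitoneOn_of_deriv_nonpos (convex_Icc _ _) (hcontx.mono hsub) ?_ ?_
      · intro t ht
        rw [interior_Icc] at ht
        exact ((hx t (hsub ⟨ht.1.le, ht.2.le⟩)).differentiableAt).differentiableWithinAt
      · intro t ht
        rw [interior_Icc] at ht
        have htmem : t ∈ Icc 0 T := hsub ⟨ht.1.le, ht.2.le⟩
        have hut : u t = 0 := hu0 t htmem (hlt t ht.1 htmem.2)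
        rw [(hx t htmem).deriv, hut]
        have : -g < φ (x t) := by
          rw [← hmin]; exact hφmono (hxin t htmem).1
        linarith
    -- the auxiliary function F
    set F : ℝ → ℝ := fun t => (ψ t - α) * Real.exp (-(t / α)) with hF
    have hFd : ∀ t ∈ Icc (0:ℝ) T, HasDerivAt F
        ((-1 + ψ t * deriv φ (x t)) * Real.exp (-(t / α)) +
          (ψ t - α) * (Real.exp (-(t / α)) * (-(1 / α)))) t := by
      intro t ht
      have h1 : HasDerivAt (fun s => ψ s - α) (-1 + ψ t * deriv φ (x t)) t :=
        (hψ t ht).sub_const α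
      have h2 : HasDerivAt (fun s : ℝ => Real.exp (-(s / α)))
          (Real.exp (-(t / α)) * (-(1 / α))) t := by
        have hinner : HasDerivAt (fun s : ℝ => -(s / α)) (-(1 / α)) t := by
          have := (hasDerivAt_id t).div_const α
          simpa [Pi.neg_def] using this.neg
        exact (Real.hasDerivAt_exp (-(t / α))).comp t hinner
      exact h1.mul h2
    have hFmono : MonotoneOn F (Icc t₀ t₂) := by
      refine monotoneOn_of_deriv_nonneg (convex_Icc _ _) ?_ ?_ ?_
      · exact fun t ht => ((hFd t (hsub ht)).continuousAt).continuousWithinAt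
      · intro t ht
        rw [interior_Icc] at ht
        exact ((hFd t (hsub ⟨ht.1.le, ht.2.le⟩)).differentiableAt).differentiableWithinAt
      · intro t ht
        rw [interior_Icc] at ht
        have htmem : t ∈ Icc 0 T := hsub ⟨ht.1.le, ht.2.le⟩
        rw [(hFd t htmem).deriv]
        have hψgt : 0 < ψ t := hψpos t ht.1.le ht.2
        have hxle : x t ≤ x₁ := by
          have := hxanti (left_mem_Icc.mpr ht₀t₂.le) ⟨ht.1.le, ht.2.le⟩ ht.1.le
          rwa [hxt₀] at this
        have hφ'ge : deriv φ x₁ ≤ deriv φ (x t) :=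
          deriv_anti_of_concave φ hφdiff hφC2 hφ''neg _ _ hxle hx₁
        have hd1 : 1 / α ≤ deriv φ (x t) := hφ'x₁ ▸ hφ'ge
        have he : 0 < Real.exp (-(t / α)) := Real.exp_pos _
        have hαα : α * (1 / α) = 1 := by field_simp
        have hkey : (-1 + ψ t * deriv φ (x t)) * Real.exp (-(t / α)) +
            (ψ t - α) * (Real.exp (-(t / α)) * (-(1 / α)))
            = Real.exp (-(t / α)) * (ψ t * (deriv φ (x t) - 1 / α)) +
              Real.exp (-(t / α)) * (α * (1 / α) - 1) := by ring
        rw [hkey, hαα]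
        have : 0 ≤ Real.exp (-(t / α)) * (ψ t * (deriv φ (x t) - 1 / α)) :=
          mul_nonneg he.le (mul_nonneg hψgt.le (sub_nonneg.mpr hd1))
        linarith
    have hFle := hFmono (left_mem_Icc.mpr ht₀t₂.le) (right_mem_Icc.mpr ht₀t₂.le) ht₀t₂.le
    have hFt₀ : F t₀ = 0 := by simp [hF, hψt₀]
    have hFt₂ : F t₂ < 0 :=
      mul_neg_of_neg_of_pos (by linarith) (Real.exp_pos _)
    rw [hFt₀] at hFle
    linarith
  · -- c > 0 : ψ would exceed α just after t₀
    have h0c : c ≤ 0 := by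
      refine deriv_nonpos_of_right hderivt₀ ?_
      filter_upwards [Ioc_mem_nhdsGT ht₀T] with t ht
      rw [hψt₀]
      exact (hlt t ht.1 ht.2).le
    linarith
end

section
/- Let α > 0 and t₁ < t₂. Let x : [t₁,t₂] → ℝ be continuous and ψ : [t₁,t₂] → ℝ differentiable with ψ(t) = α for all t ∈ [t₁,t₂] and ψ'(t) = −1 + ψ(t)·φ'(x(t)) for all t ∈ [t₁,t₂]. Then φ'(x(t)) = 1/α for all t ∈ [t₁,t₂], and x is constant on [t₁,t₂] (since the level set {y : φ'(y) = 1/α} contains at most two points, φ' being strictly decreasing on (−∞,0) and strictly increasing on (0,∞)). If moreover x is differentiable with x'(t) = u(t) − φ(x(t)) − g for a function u on (t₁,t₂), then the singular control satisfies u(t) = φ(x(t₁)) + g for all t ∈ (t₁,t₂). -/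
/-- On a singular arc ψ ≡ α one has φ'(x(t)) = 1/α, x is constant,
    and the singular control equals φ(x(t₁)) + g. -/
theorem stmt_9 (φ : ℝ → ℝ) (g xmin xmax : ℝ)
    (hφ0 : φ 0 = 0)
    (hφdiff : Differentiable ℝ φ)
    (hφ' : ∀ y : ℝ, 0 < deriv φ y)
    (hφC2 : ContDiffOn ℝ 2 φ {(0:ℝ)}ᶜ)
    (hφ''neg : ∀ y : ℝ, y < 0 → deriv (deriv φ) y < 0)
    (hφ''pos : ∀ y : ℝ, 0 < y → 0 < deriv (deriv φ) y)
    (hg0 : 0 < g) (hg1 : g < 1)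
    (hxminneg : xmin < 0) (hxmaxpos : 0 < xmax)
    (hmin : φ xmin = -g) (hmax : φ xmax = 1 - g)
    (α : ℝ) (hα : 0 < α)
    (t₁ t₂ : ℝ) (ht : t₁ < t₂)
    (x ψ u : ℝ → ℝ)
    (hxcont : ContinuousOn x (Set.Icc t₁ t₂))
    (hψeq : ∀ t ∈ Set.Icc t₁ t₂, ψ t = α)
    (hψ : ∀ t ∈ Set.Icc t₁ t₂, HasDerivAt ψ (-1 + ψ t * deriv φ (x t)) t) :
    (∀ t ∈ Set.Icc t₁ t₂, deriv φ (x t) = 1 / α) ∧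
    (∀ t ∈ Set.Icc t₁ t₂, x t = x t₁) ∧
    ((∀ t ∈ Set.Ioo t₁ t₂, HasDerivAt x (u t - φ (x t) - g) t) →
      ∀ t ∈ Set.Ioo t₁ t₂, u t = φ (x t₁) + g) := by
  -- Part 1
  have h1 : ∀ t ∈ Set.Icc t₁ t₂, deriv φ (x t) = 1 / α := by
    intro t htmem
    have hu : UniqueDiffWithinAt ℝ (Set.Icc t₁ t₂) t :=
      (uniqueDiffOn_Icc ht) t htmem
    have hd : HasDerivWithinAt ψ (-1 + ψ t * deriv φ (x t)) (Set.Icc t₁ t₂) t :=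
      (hψ t htmem).hasDerivWithinAt
    have hc : HasDerivWithinAt ψ 0 (Set.Icc t₁ t₂) t :=
      (hasDerivWithinAt_const t (Set.Icc t₁ t₂) α).congr
        (fun s hs => hψeq s hs) (hψeq t htmem)
    have h0 : -1 + ψ t * deriv φ (x t) = 0 := by
      have e1 := hd.derivWithin hu
      have e2 := hc.derivWithin hu
      rw [e1] at e2; exact e2
    rw [hψeq t htmem] at h0
    field_simp
    linarith
  -- the level set is finite
  have hderivcont : ContinuousOn (deriv φ) ({(0:ℝ)}ᶜ) := by
    exact hφC2.continuousOn_deriv_of_isOpen isOpen_compl_singleton one_le_two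
  have hanti : StrictAntiOn (deriv φ) (Set.Iio 0) := by
    apply strictAntiOn_of_deriv_neg (convex_Iio 0)
    · exact hderivcont.mono (fun y hy => ne_of_lt hy)
    · intro y hy
      rw [interior_Iio] at hy
      exact hφ''neg y hy
  have hmono : StrictMonoOn (deriv φ) (Set.Ioi 0) := by
    apply strictMonoOn_of_deriv_pos (convex_Ioi 0)
    · exact hderivcont.mono (fun y hy => ne_of_gt hy)
    · intro y hy
      rw [interior_Ioi] at hy
      exact hφ''pos y hy
  set S : Set ℝ := {y | deriv φ y = 1 / α} with hS
  have hSfin : S.Finite := by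
    have hsub : S ⊆ (S ∩ Set.Iio 0) ∪ ({0} : Set ℝ) ∪ (S ∩ Set.Ioi 0) := by
      intro y hy
      rcases lt_trichotomy y 0 with h | h | h
      · exact Or.inl (Or.inl ⟨hy, h⟩)
      · exact Or.inl (Or.inr h)
      · exact Or.inr ⟨hy, h⟩
    have f1 : (S ∩ Set.Iio 0).Subsingleton := by
      intro a ha b hb
      exact hanti.injOn ha.2 hb.2 (ha.1.trans hb.1.symm)
    have f2 : (S ∩ Set.Ioi 0).Subsingleton := by
      intro a ha b hb
      exact hmono.injOn ha.2 hb.2 (ha.1.trans hb.1.symm)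
    exact Set.Finite.subset ((f1.finite.union (Set.finite_singleton 0)).union f2.finite) hsub
  have h2 : ∀ t ∈ Set.Icc t₁ t₂, x t = x t₁ := by
    intro t htmem
    by_contra hne
    have ht₁mem : t₁ ∈ Set.Icc t₁ t₂ := Set.left_mem_Icc.mpr ht.le
    have himg : x '' (Set.Icc t₁ t₂) ⊆ S := by
      rintro _ ⟨s, hs, rfl⟩
      exact h1 s hs
    have hconn : IsPreconnected (x '' (Set.Icc t₁ t₂)) :=
      (isPreconnected_Icc).image x hxcont
    have hord := hconn.ordConnected
    have hmem1 : x t₁ ∈ x '' (Set.Icc t₁ t₂) := ⟨t₁, ht₁mem, rfl⟩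
    have hmem2 : x t ∈ x '' (Set.Icc t₁ t₂) := ⟨t, htmem, rfl⟩
    rcases lt_or_gt_of_ne hne with h | h
    · have : Set.Icc (x t) (x t₁) ⊆ S :=
        fun z hz => himg (hord.out hmem2 hmem1 hz)
      exact (Set.Icc_infinite h) (hSfin.subset this)
    · have : Set.Icc (x t₁) (x t) ⊆ S :=
        fun z hz => himg (hord.out hmem1 hmem2 hz)
      exact (Set.Icc_infinite h) (hSfin.subset this)
  refine ⟨h1, h2, ?_⟩
  intro hx t htmem
  have hmemIcc : t ∈ Set.Icc t₁ t₂ := Set.mem_Icc.mpr ⟨htmem.1.le, htmem.2.le⟩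
  have hnhds : Set.Ioo t₁ t₂ ∈ nhds t := (isOpen_Ioo).mem_nhds htmem
  have hev : x =ᶠ[nhds t] (fun _ => x t₁) := by
    filter_upwards [hnhds] with s hs
    exact h2 s (Set.mem_Icc.mpr ⟨hs.1.le, hs.2.le⟩)
  have hc : HasDerivAt x 0 t :=
    (hasDerivAt_const t (x t₁)).congr_of_eventuallyEq hev
  have := (hx t htmem).unique hc
  have hxt : x t = x t₁ := h2 t hmemIcc
  rw [hxt] at this
  linarith
end

section
/- Let α > 0 and t' < t''. Let x, ψ : [t',t''] → ℝ be differentiable with x'(t) = −φ(x(t)) − g and ψ'(t) = −1 + ψ(t)·φ'(x(t)) on [t',t''] (dynamics with control u = 0). Assume: ψ(t') = α; ψ(t) < α for all t in some right neighbourhood (t', t'+ε) of t'; ψ(t) > 0 on (t',t''); x(t) > 0 for all t ∈ (t',t''); and x(t'') = 0. Then ψ is twice differentiable on (t',t'') and ψ''(t) < 0 for all t ∈ (t',t''). -/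
open Set Filter Topology

/-- If `f` has negative derivative at `s₀` and `f s₀ = 0`, then `f < 0` just right of `s₀`. -/
lemma stmt10_aux_right_neg {f : ℝ → ℝ} {c s₀ : ℝ} (hf : HasDerivAt f c s₀) (hc : c < 0)
    (h0 : f s₀ = 0) : ∀ᶠ s in 𝓝[>] s₀, f s < 0 := by
  have h := hasDerivAt_iff_tendsto_slope.mp hf
  have h2 : Tendsto (slope f s₀) (𝓝[>] s₀) (𝓝 c) :=
    h.mono_left (nhdsWithin_mono _ (fun y hy => ne_of_gt hy))
  have h3 : ∀ᶠ s in 𝓝[>] s₀, slope f s₀ s < 0 := h2.eventually_lt_const hc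
  filter_upwards [h3, self_mem_nhdsWithin] with s hs hs'
  rw [slope_def_field, h0, sub_zero] at hs
  have hpos : (0:ℝ) < s - s₀ := sub_pos.mpr hs'
  rcases div_neg_iff.mp hs with ⟨_, h2'⟩ | ⟨h1, _⟩
  · linarith
  · exact h1

/-- On a u = 0 arc starting at the level ψ = α, while the velocity
    stays positive until it vanishes, ψ is strictly concave (ψ'' < 0). -/
theorem stmt_10 (φ : ℝ → ℝ) (g xmin xmax : ℝ)
    (hφ0 : φ 0 = 0)
    (hφdiff : Differentiable ℝ φ)
    (hφ' : ∀ y : ℝ, 0 < deriv φ y)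
    (hφC2 : ContDiffOn ℝ 2 φ {(0:ℝ)}ᶜ)
    (hφ''neg : ∀ y : ℝ, y < 0 → deriv (deriv φ) y < 0)
    (hφ''pos : ∀ y : ℝ, 0 < y → 0 < deriv (deriv φ) y)
    (hg0 : 0 < g) (hg1 : g < 1)
    (hxminneg : xmin < 0) (hxmaxpos : 0 < xmax)
    (hmin : φ xmin = -g) (hmax : φ xmax = 1 - g)
    (α : ℝ) (hα : 0 < α)
    (t' t'' : ℝ) (ht : t' < t'')
    (x ψ : ℝ → ℝ)
    (hx : ∀ t ∈ Set.Icc t' t'', HasDerivAt x (-(φ (x t)) - g) t)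
    (hψ : ∀ t ∈ Set.Icc t' t'', HasDerivAt ψ (-1 + ψ t * deriv φ (x t)) t)
    (hψt' : ψ t' = α)
    (hright : ∃ ε > 0, ∀ t ∈ Set.Ioo t' (t' + ε), ψ t < α)
    (hψpos : ∀ t ∈ Set.Ioo t' t'', 0 < ψ t)
    (hxpos : ∀ t ∈ Set.Ioo t' t'', 0 < x t)
    (hxt'' : x t'' = 0) :
    ∀ t ∈ Set.Ioo t' t'',
      DifferentiableAt ℝ (deriv ψ) t ∧ deriv (deriv ψ) t < 0 := by
  obtain ⟨ε, hε, hεψ⟩ := hright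
  have hφmono : StrictMono φ := strictMono_of_deriv_pos hφ'
  have hφ'C1 : ContDiffOn ℝ 1 (deriv φ) {(0:ℝ)}ᶜ :=
    hφC2.deriv_of_isOpen isOpen_compl_singleton (by norm_num)
  have hφ'diffAt : ∀ y : ℝ, y ≠ 0 → DifferentiableAt ℝ (deriv φ) y := fun y hy =>
    (hφ'C1.contDiffAt (isOpen_compl_singleton.mem_nhds hy)).differentiableAt one_ne_zero
  have hxcont : ContinuousOn x (Set.Icc t' t'') := fun s hs =>
    (hx s hs).differentiableAt.continuousAt.continuousWithinAt
  have hψcont : ContinuousOn ψ (Set.Icc t' t'') := fun s hs =>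
    (hψ s hs).differentiableAt.continuousAt.continuousWithinAt
  have hx'neg : ∀ s ∈ Set.Ioo t' t'', -(φ (x s)) - g < 0 := by
    intro s hs
    have h1 : φ 0 < φ (x s) := hφmono (hxpos s hs)
    rw [hφ0] at h1
    linarith
  have hxanti : StrictAntiOn x (Set.Icc t' t'') := by
    apply strictAntiOn_of_deriv_neg (convex_Icc _ _) hxcont
    intro s hs
    rw [interior_Icc] at hs
    rw [(hx s (Set.Ioo_subset_Icc_self hs)).deriv]
    exact hx'neg s hs
  have hxposIco : ∀ s ∈ Set.Ico t' t'', 0 < x s := by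
    intro s hs
    rcases eq_or_lt_of_le hs.1 with h | h
    · have hmid : (t' + t'')/2 ∈ Set.Ioo t' t'' := ⟨by linarith, by linarith⟩
      have h1 := hxanti (Set.left_mem_Icc.mpr (le_of_lt ht)) (Set.Ioo_subset_Icc_self hmid) hmid.1
      have h2 := hxpos _ hmid
      rw [← h]
      linarith
    · exact hxpos s ⟨h, hs.2⟩
  set F : ℝ → ℝ := fun s => -1 + ψ s * deriv φ (x s) with hF
  have hderivψ : ∀ s ∈ Set.Icc t' t'', deriv ψ s = F s := fun s hs => (hψ s hs).deriv
  -- the second-derivative formula on the open interval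
  have key : ∀ t ∈ Set.Ioo t' t'',
      HasDerivAt (deriv ψ)
        ((-1 + ψ t * deriv φ (x t)) * deriv φ (x t)
          + ψ t * (deriv (deriv φ) (x t) * (-(φ (x t)) - g))) t := by
    intro t htt
    have htI : t ∈ Set.Icc t' t'' := Set.Ioo_subset_Icc_self htt
    have hx0 : x t ≠ 0 := ne_of_gt (hxpos t htt)
    have h1 : HasDerivAt (fun s => deriv φ (x s))
        (deriv (deriv φ) (x t) * (-(φ (x t)) - g)) t :=
      (hφ'diffAt (x t) hx0).hasDerivAt.comp t (hx t htI)
    have h2 : HasDerivAt F ((-1 + ψ t * deriv φ (x t)) * deriv φ (x t)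
        + ψ t * (deriv (deriv φ) (x t) * (-(φ (x t)) - g))) t := by
      rw [hF]
      simpa using ((hψ t htI).mul h1).const_add (-1)
    have heq : deriv ψ =ᶠ[nhds t] F := by
      filter_upwards [isOpen_Ioo.mem_nhds htt] with s hs
      exact hderivψ s (Set.Ioo_subset_Icc_self hs)
    exact heq.hasDerivAt_iff.mpr h2
  -- deriv ψ t' ≤ 0, from ψ < α on a right neighbourhood
  have ht'I : t' ∈ Set.Icc t' t'' := Set.left_mem_Icc.mpr (le_of_lt ht)
  have hψ't' : deriv ψ t' ≤ 0 := by
    have hD := hψ t' ht'I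
    rw [hD.deriv]
    have hslope : Tendsto (slope ψ t') (𝓝[>] t') (𝓝 (-1 + ψ t' * deriv φ (x t'))) :=
      (hasDerivAt_iff_tendsto_slope.mp hD).mono_left
        (nhdsWithin_mono _ (fun y hy => ne_of_gt hy))
    refine le_of_tendsto hslope ?_
    have hmem : Set.Ioo t' (min (t' + ε) t'') ∈ 𝓝[>] t' :=
      Ioo_mem_nhdsGT_of_mem ⟨le_refl _, lt_min (by linarith) ht⟩
    filter_upwards [hmem] with s hs
    have h1 : ψ s < α := hεψ s ⟨hs.1, lt_of_lt_of_le hs.2 (min_le_left _ _)⟩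
    rw [slope_def_field, hψt']
    exact le_of_lt (div_neg_of_neg_of_pos (by linarith) (by linarith [hs.1]))
  -- the crucial claim: deriv ψ ≤ 0 on the open interval
  have hψ'np : ∀ t ∈ Set.Ioo t' t'', deriv ψ t ≤ 0 := by
    by_contra hcon
    push_neg at hcon
    obtain ⟨t₀, ht₀, ht₀pos⟩ := hcon
    have ht't₀ : t' < t₀ := ht₀.1
    have hsub : Set.Icc t' t₀ ⊆ Set.Icc t' t'' := Set.Icc_subset_Icc_right (le_of_lt ht₀.2)
    have hcontF : ContinuousOn F (Set.Icc t' t₀) := by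
      rw [hF]
      apply ContinuousOn.add continuousOn_const
      apply ContinuousOn.mul (hψcont.mono hsub)
      apply ContinuousOn.comp hφ'C1.continuousOn (hxcont.mono hsub)
      intro s hs
      exact Set.mem_compl_singleton_iff.mpr
        (ne_of_gt (hxposIco s ⟨hs.1, lt_of_le_of_lt hs.2 ht₀.2⟩))
    have hcontψ' : ContinuousOn (deriv ψ) (Set.Icc t' t₀) :=
      hcontF.congr (fun s hs => hderivψ s (hsub hs))
    set S : Set ℝ := Set.Icc t' t₀ ∩ (deriv ψ) ⁻¹' (Set.Iic 0) with hS
    have hScl : IsClosed S := hcontψ'.preimage_isClosed_of_isClosed isClosed_Icc isClosed_Iic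
    have hScomp : IsCompact S := isCompact_Icc.of_isClosed_subset hScl Set.inter_subset_left
    have hmemS : t' ∈ S := ⟨Set.left_mem_Icc.mpr (le_of_lt ht't₀), hψ't'⟩
    set s₀ := sSup S with hs₀def
    have hs₀S : s₀ ∈ S := hScomp.sSup_mem ⟨t', hmemS⟩
    have hs₀le : deriv ψ s₀ ≤ 0 := hs₀S.2
    have hs₀Icc : s₀ ∈ Set.Icc t' t₀ := hs₀S.1
    have hs₀lt : s₀ < t₀ := lt_of_le_of_ne hs₀Icc.2 (fun h => by rw [h] at hs₀le; linarith)
    have hgt : ∀ s, s₀ < s → s ≤ t₀ → 0 < deriv ψ s := by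
      intro s hss hst
      by_contra hle
      push_neg at hle
      have hsS : s ∈ S := ⟨⟨le_trans hs₀Icc.1 (le_of_lt hss), hst⟩, hle⟩
      have h1 := le_csSup hScomp.bddAbove hsS
      rw [← hs₀def] at h1
      linarith
    have hs₀0 : deriv ψ s₀ = 0 := by
      refine le_antisymm hs₀le ?_
      have hcw : Tendsto (deriv ψ) (𝓝[Set.Ioc s₀ t₀] s₀) (𝓝 (deriv ψ s₀)) :=
        (hcontψ' s₀ hs₀Icc).mono (fun y hy => ⟨le_trans hs₀Icc.1 hy.1.le, hy.2⟩)
      have hne : (𝓝[Set.Ioc s₀ t₀] s₀).NeBot := by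
        rw [nhdsWithin_Ioc_eq_nhdsGT hs₀lt]; infer_instance
      refine ge_of_tendsto hcw ?_
      filter_upwards [self_mem_nhdsWithin] with s hs
      exact le_of_lt (hgt s hs.1 hs.2)
    rcases eq_or_lt_of_le hs₀Icc.1 with hcase | hcase
    · -- s₀ = t' : ψ would be strictly increasing, contradicting hright
      have hmono : StrictMonoOn ψ (Set.Icc t' t₀) := by
        apply strictMonoOn_of_deriv_pos (convex_Icc _ _) (hψcont.mono hsub)
        intro s hs
        rw [interior_Icc] at hs
        exact hgt s (hcase ▸ hs.1) (le_of_lt hs.2)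
      have hm1 : t' < min (t' + ε) t₀ := lt_min (by linarith) ht't₀
      have hτ1 : t' < (t' + min (t' + ε) t₀)/2 := by linarith
      have hτ2 : (t' + min (t' + ε) t₀)/2 < min (t' + ε) t₀ := by linarith
      have hψτ : ψ ((t' + min (t' + ε) t₀)/2) < α :=
        hεψ _ ⟨hτ1, lt_of_lt_of_le hτ2 (min_le_left _ _)⟩
      have hτt₀ : (t' + min (t' + ε) t₀)/2 ≤ t₀ :=
        le_of_lt (lt_of_lt_of_le hτ2 (min_le_right _ _))
      have h2 := hmono (Set.left_mem_Icc.mpr (le_of_lt ht't₀))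
        (Set.mem_Icc.mpr ⟨le_of_lt hτ1, hτt₀⟩) hτ1
      rw [hψt'] at h2
      linarith
    · -- t' < s₀ : second derivative at s₀ is negative, contradiction
      have hs₀Ioo : s₀ ∈ Set.Ioo t' t'' := ⟨hcase, lt_trans hs₀lt ht₀.2⟩
      have hK := key s₀ hs₀Ioo
      have hFs₀ : -1 + ψ s₀ * deriv φ (x s₀) = 0 := by
        have h1 := hderivψ s₀ (hsub hs₀Icc)
        rw [hs₀0, hF] at h1
        exact h1.symm
      have hval : (-1 + ψ s₀ * deriv φ (x s₀)) * deriv φ (x s₀)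
          + ψ s₀ * (deriv (deriv φ) (x s₀) * (-(φ (x s₀)) - g)) < 0 := by
        rw [hFs₀, zero_mul, zero_add]
        exact mul_neg_of_pos_of_neg (hψpos s₀ hs₀Ioo)
          (mul_neg_of_pos_of_neg (hφ''pos _ (hxpos s₀ hs₀Ioo)) (hx'neg s₀ hs₀Ioo))
      have hev := stmt10_aux_right_neg hK hval hs₀0
      have hmem : Set.Ioc s₀ t₀ ∈ 𝓝[>] s₀ := Ioc_mem_nhdsGT_of_mem ⟨le_refl _, hs₀lt⟩
      obtain ⟨s, hs1, hs2⟩ := (hev.and (Filter.eventually_mem_set.mpr hmem)).exists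
      exact absurd (hgt s hs2.1 hs2.2) (by linarith)
  -- conclude
  intro t htt
  have hK := key t htt
  refine ⟨hK.differentiableAt, ?_⟩
  rw [hK.deriv]
  have h1 : -1 + ψ t * deriv φ (x t) ≤ 0 := by
    have h := hψ'np t htt
    rw [hderivψ t (Set.Ioo_subset_Icc_self htt), hF] at h
    exact h
  have h2 : (-1 + ψ t * deriv φ (x t)) * deriv φ (x t) ≤ 0 :=
    mul_nonpos_iff.mpr (Or.inr ⟨h1, le_of_lt (hφ' (x t))⟩)
  have h3 : ψ t * (deriv (deriv φ) (x t) * (-(φ (x t)) - g)) < 0 :=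
    mul_neg_of_pos_of_neg (hψpos t htt)
      (mul_neg_of_pos_of_neg (hφ''pos _ (hxpos t htt)) (hx'neg t htt))
  linarith
end

section
/- Let t' < t'' and let x, ψ : [t',t''] → ℝ be differentiable with x'(t) = −φ(x(t)) − g and ψ'(t) = −1 + ψ(t)·(b·|x(t)| + k) on (t',t'') (dynamics with control u = 0). Let t̄ ∈ (t',t'') be such that: x(t) > 0 on (t', t̄); x(t̄) = 0; x(t) ∈ (x_min, 0) for all t ∈ (t̄, t''); ψ'(t) < 0 on some left neighbourhood of t̄; and ψ(t̄) ≤ k/(k² + bg) (equivalently, the right second derivative of ψ at t̄ is ≤ 0). Then ψ is twice differentiable on (t̄, t'') and ψ''(t) < 0 for all t ∈ (t̄, t''). -/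
set_option maxHeartbeats 1000000 in
/-- quadratic friction: after the velocity crosses zero on a u = 0
    arc, if ψ(t̄) ≤ k/(k² + bg) then ψ'' < 0 on (t̄, t''). -/
theorem stmt_11 (b k g : ℝ) (hb : 0 < b) (hk : 0 < k) (hg0 : 0 < g) (hg1 : g < 1)
    (φ : ℝ → ℝ)
    (hφ : ∀ y : ℝ, φ y = if 0 ≤ y then b / 2 * y ^ 2 + k * y else -(b / 2) * y ^ 2 + k * y)
    (xmin : ℝ) (hxmin : xmin = (k - Real.sqrt (k ^ 2 + 2 * b * g)) / b)
    (t' t'' : ℝ) (ht : t' < t'')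
    (x ψ : ℝ → ℝ)
    (hxdiff : DifferentiableOn ℝ x (Set.Icc t' t''))
    (hψdiff : DifferentiableOn ℝ ψ (Set.Icc t' t''))
    (hx : ∀ t ∈ Set.Ioo t' t'', HasDerivAt x (-(φ (x t)) - g) t)
    (hψ : ∀ t ∈ Set.Ioo t' t'', HasDerivAt ψ (-1 + ψ t * (b * |x t| + k)) t)
    (tb : ℝ) (htb : tb ∈ Set.Ioo t' t'')
    (hxpos : ∀ t ∈ Set.Ioo t' tb, 0 < x t)
    (hxtb : x tb = 0)
    (hxneg : ∀ t ∈ Set.Ioo tb t'', x t ∈ Set.Ioo xmin 0)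
    (hleft : ∃ ε > 0, ∀ t ∈ Set.Ioo (tb - ε) tb, deriv ψ t < 0)
    (hψtb : ψ tb ≤ k / (k ^ 2 + b * g)) :
    ∀ t ∈ Set.Ioo tb t'',
      DifferentiableAt ℝ (deriv ψ) t ∧ deriv (deriv ψ) t < 0 := by
  set s : ℝ := Real.sqrt (k ^ 2 + 2 * b * g) with hsdef
  have hs0 : 0 ≤ s := Real.sqrt_nonneg _
  have hs2 : s ^ 2 = k ^ 2 + 2 * b * g := Real.sq_sqrt (by positivity)
  have hks : k < s := by nlinarith
  have hxmin0 : xmin < 0 := by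
    rw [hxmin]; exact div_neg_of_neg_of_pos (by linarith) hb
  set c : ℝ := k / (k ^ 2 + b * g) with hcdef
  have hden : (0:ℝ) < k ^ 2 + b * g := by positivity
  have hc0 : 0 < c := div_pos hk hden
  have hcs : c * s < 1 := by
    rw [hcdef, div_mul_eq_mul_div, div_lt_one hden]
    nlinarith
  -- xmin bound in multiplied form
  have hxm_mul : b * xmin = k - s := by
    rw [hxmin]; field_simp
  -- |x τ| bound
  have habs_lt : ∀ τ ∈ Set.Ico tb t'', b * |x τ| + k < s := by
    intro τ hτ
    rcases eq_or_lt_of_le hτ.1 with h | h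
    · rw [← h, hxtb]; simpa using hks
    · have hxτ := hxneg τ ⟨h, hτ.2⟩
      rw [abs_of_neg hxτ.2]
      have hbx : k - s < b * x τ := by
        have := hxτ.1
        nlinarith [hxm_mul]
      linarith
  -- derivative is negative wherever ψ ≤ c on [tb, t'')
  have hdneg : ∀ τ ∈ Set.Ico tb t'', ψ τ ≤ c → -1 + ψ τ * (b * |x τ| + k) < 0 := by
    intro τ hτ hψτ
    have hP : 0 < b * |x τ| + k := by positivity
    have hPs := habs_lt τ hτ
    have h1 : ψ τ * (b * |x τ| + k) ≤ c * (b * |x τ| + k) :=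
      mul_le_mul_of_nonneg_right hψτ hP.le
    have h2 : c * (b * |x τ| + k) < c * s := by
      exact mul_lt_mul_of_pos_left hPs hc0
    linarith
  -- invariance: ψ ≤ c on [tb, t'')
  have key : ∀ τ ∈ Set.Ico tb t'', ψ τ ≤ c := by
    by_contra hcon
    push_neg at hcon
    obtain ⟨t₁, ht₁, hgt⟩ := hcon
    have htb1 : tb < t₁ := by
      rcases eq_or_lt_of_le ht₁.1 with h | h
      · exfalso; rw [← h] at hgt; rw [hcdef] at hgt; linarith
      · exact h
    set K := Set.Icc tb t₁ ∩ ψ ⁻¹' Set.Iic c with hK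
    have hsub : Set.Icc tb t₁ ⊆ Set.Icc t' t'' :=
      Set.Icc_subset_Icc htb.1.le (le_of_lt ht₁.2)
    have hKc : IsClosed K :=
      ContinuousOn.preimage_isClosed_of_isClosed
        ((hψdiff.continuousOn).mono hsub) isClosed_Icc isClosed_Iic
    have hKne : K.Nonempty := ⟨tb, ⟨le_refl tb, htb1.le⟩, by
      simp only [Set.mem_preimage, Set.mem_Iic]; rw [hcdef]; exact hψtb⟩
    have hKbdd : BddAbove K := ⟨t₁, fun y hy => hy.1.2⟩
    set m := sSup K with hm
    have hmK : m ∈ K := hKc.csSup_mem hKne hKbdd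
    have hψm : ψ m ≤ c := hmK.2
    have hmt₁ : m < t₁ := lt_of_le_of_ne hmK.1.2 (by
      intro h; rw [h] at hψm; linarith)
    have hmI : m ∈ Set.Ioo t' t'' := ⟨lt_of_lt_of_le htb.1 hmK.1.1, lt_trans hmt₁ ht₁.2⟩
    have hd := hψ m hmI
    have hdval : -1 + ψ m * (b * |x m| + k) < 0 :=
      hdneg m ⟨hmK.1.1, hmI.2⟩ hψm
    rw [hasDerivAt_iff_tendsto_slope] at hd
    have hev1 : ∀ᶠ τ in nhdsWithin m (Set.Ioi m), slope ψ m τ < 0 := by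
      have := hd.mono_left (nhdsWithin_mono m (fun y (hy : y ∈ Set.Ioi m) => ne_of_gt hy))
      exact this.eventually_lt_const hdval
    have hev2 : Set.Ioo m t₁ ∈ nhdsWithin m (Set.Ioi m) :=
      Ioo_mem_nhdsGT_of_mem ⟨le_refl m, hmt₁⟩
    obtain ⟨τ, hτs, hτI⟩ := (hev1.and (Filter.eventually_of_mem hev2 (fun _ h => h))).exists
    have hτm : m < τ := hτI.1
    have hψτ : ψ τ < ψ m := by
      have hslope : (ψ τ - ψ m) / (τ - m) < 0 := by
        rw [slope_def_field] at hτs; exact hτs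
      rcases div_neg_iff.mp hslope with ⟨h1, h2⟩ | ⟨h1, h2⟩
      · linarith [sub_pos.mpr hτm]
      · linarith
    have hτK : τ ∈ K := ⟨⟨le_of_lt (lt_of_le_of_lt hmK.1.1 hτm), hτI.2.le⟩, by
      simp only [Set.mem_preimage, Set.mem_Iic]; linarith⟩
    exact absurd (le_csSup hKbdd hτK) (not_le.mpr hτm)
  -- main computation
  intro t htt
  have htI : t ∈ Set.Ioo t' t'' := ⟨htb.1.trans htt.1, htt.2⟩
  have hxt := hxneg t htt
  have hy0 : x t < 0 := hxt.2
  have hφx : φ (x t) = -(b / 2) * (x t) ^ 2 + k * (x t) := by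
    rw [hφ]; rw [if_neg (not_le.mpr hy0)]
  have hdx := hx t htI
  have hdψ0 := hψ t htI
  have hdψ : HasDerivAt ψ (-1 + ψ t * (b * (-(x t)) + k)) t := by
    rwa [abs_of_neg hy0] at hdψ0
  have h1 : HasDerivAt (fun τ => b * (-(x τ)) + k) (b * (-(-(φ (x t)) - g))) t :=
    ((hdx.neg).const_mul b).add_const k
  have h2 : HasDerivAt (fun τ => ψ τ * (b * (-(x τ)) + k))
      ((-1 + ψ t * (b * (-(x t)) + k)) * (b * (-(x t)) + k)
        + ψ t * (b * (-(-(φ (x t)) - g)))) t := hdψ.mul h1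
  have hFd : HasDerivAt (fun τ => -1 + ψ τ * (b * (-(x τ)) + k))
      ((-1 + ψ t * (b * (-(x t)) + k)) * (b * (-(x t)) + k)
        + ψ t * (b * (-(-(φ (x t)) - g)))) t := h2.const_add (-1)
  have heq : deriv ψ =ᶠ[nhds t] (fun τ => -1 + ψ τ * (b * (-(x τ)) + k)) := by
    filter_upwards [Ioo_mem_nhds htt.1 htt.2] with τ hτ
    have hτI : τ ∈ Set.Ioo t' t'' := ⟨htb.1.trans hτ.1, hτ.2⟩
    rw [(hψ τ hτI).deriv, abs_of_neg (hxneg τ hτ).2]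
  have hD : HasDerivAt (deriv ψ)
      ((-1 + ψ t * (b * (-(x t)) + k)) * (b * (-(x t)) + k)
        + ψ t * (b * (-(-(φ (x t)) - g)))) t := hFd.congr_of_eventuallyEq heq
  refine ⟨hD.differentiableAt, ?_⟩
  rw [hD.deriv, hφx]
  -- numeric estimate
  set y := x t with hy
  set p := ψ t with hp
  have hpc : p ≤ c := key t ⟨htt.1.le, htt.2⟩
  have hpk : p * (k ^ 2 + b * g) ≤ k := by
    rw [hcdef, le_div_iff₀ hden] at hpc; exact hpc
  have hby : k - s < b * y := by
    have := hxt.1; nlinarith [hxm_mul]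
  have hB : 0 < k ^ 2 - b * k * y + b ^ 2 / 2 * y ^ 2 + b * g := by
    nlinarith [sq_nonneg y, mul_pos hb hk]
  have hgy : 0 < 2 * b * g + b * k * y := by
    nlinarith [mul_lt_mul_of_pos_left hby hk, mul_pos (sub_pos.mpr hks) (lt_of_le_of_lt hk.le hks)]
  have h3 : p * (k ^ 2 + b * g) * (k ^ 2 - b * k * y + b ^ 2 / 2 * y ^ 2 + b * g)
      ≤ k * (k ^ 2 - b * k * y + b ^ 2 / 2 * y ^ 2 + b * g) :=
    mul_le_mul_of_nonneg_right hpk hB.le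
  have h4 : y * (2 * b * g + b * k * y) < 0 := mul_neg_of_neg_of_pos hy0 hgy
  nlinarith [h3, h4, hden, mul_pos hb hden]
end

section
/- Nonexistence of type-III extremals for quadratic friction: there do not exist a real α with 0 < α < 1/k, times 0 < t₁ < t₂ < t₃ < T, and continuous functions x, ψ : [0,T] → ℝ such that: (i) ψ is differentiable on [0,T] with ψ'(t) = −1 + ψ(t)·(b·|x(t)| + k) for all t, and ψ(T) = 0; (ii) x(0) = 0 and x is differentiable on each open interval (0,t₁), (t₁,t₂), (t₂,t₃), (t₃,T), with x'(t) = 1 − φ(x(t)) − g on (0,t₁) ∪ (t₂,t₃) and x'(t) = −φ(x(t)) − g on (t₁,t₂) ∪ (t₃,T); (iii) ψ(t₁) = ψ(t₂) = ψ(t₃) = α, ψ(t) > α for t ∈ (0,t₁) ∪ (t₂,t₃), and ψ(t) < α for t ∈ (t₁,t₂) ∪ (t₃,T). (This is the bang-bang control pattern u = (1,0,1,0) with three switching points; such trajectories of type III do not satisfy the Pontryagin maximum principle.) -/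
open Set Filter

lemma mono_aux {f F : ℝ → ℝ} {a b : ℝ} (hc : ContinuousOn f (Icc a b))
    (hd : ∀ t ∈ Ioo a b, HasDerivAt f (F t) t) (h0 : ∀ t ∈ Ioo a b, 0 ≤ F t) :
    MonotoneOn f (Icc a b) := by
  apply monotoneOn_of_deriv_nonneg (convex_Icc a b) hc
  · intro t ht; rw [interior_Icc] at ht
    exact (hd t ht).differentiableAt.differentiableWithinAt
  · intro t ht; rw [interior_Icc] at ht
    rw [(hd t ht).deriv]; exact h0 t ht

lemma anti_aux {f F : ℝ → ℝ} {a b : ℝ} (hc : ContinuousOn f (Icc a b))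
    (hd : ∀ t ∈ Ioo a b, HasDerivAt f (F t) t) (h0 : ∀ t ∈ Ioo a b, F t ≤ 0) :
    AntitoneOn f (Icc a b) := by
  apply antitoneOn_of_deriv_nonpos (convex_Icc a b) hc
  · intro t ht; rw [interior_Icc] at ht
    exact (hd t ht).differentiableAt.differentiableWithinAt
  · intro t ht; rw [interior_Icc] at ht
    rw [(hd t ht).deriv]; exact h0 t ht

lemma const_aux {f F : ℝ → ℝ} {a b : ℝ} (hab : a ≤ b) (hc : ContinuousOn f (Icc a b))
    (hd : ∀ t ∈ Ioo a b, HasDerivAt f (F t) t) (h0 : ∀ t ∈ Ioo a b, F t = 0) :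
    f b = f a := by
  have h1 := mono_aux hc hd (fun t ht => (h0 t ht).ge)
  have h2 := anti_aux hc hd (fun t ht => (h0 t ht).le)
  exact le_antisymm (h2 ⟨le_refl a, hab⟩ ⟨hab, le_refl b⟩ hab)
    (h1 ⟨le_refl a, hab⟩ ⟨hab, le_refl b⟩ hab)

lemma barrier_ge {f F : ℝ → ℝ} {a b M : ℝ}
    (hc : ContinuousOn f (Icc a b))
    (hd : ∀ t ∈ Ioo a b, HasDerivAt f (F t) t)
    (hFa : M ≤ f a)
    (hF : ∀ t ∈ Ioo a b, f t ≤ M → 0 ≤ F t) :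
    ∀ t ∈ Icc a b, M ≤ f t := by
  by_contra h
  push_neg at h
  obtain ⟨t', ht', hlt⟩ := h
  have hat' : a < t' := by
    rcases eq_or_lt_of_le ht'.1 with h | h
    · exact absurd hFa (by rw [h]; exact not_le.2 hlt)
    · exact h
  set S := {t | t ∈ Icc a t' ∧ M ≤ f t} with hS
  have haS : a ∈ S := ⟨⟨le_refl a, hat'.le⟩, hFa⟩
  have hbdd : BddAbove S := ⟨t', fun t ht => ht.1.2⟩
  set τ := sSup S with hτdef
  have hτmem : τ ∈ Icc a t' := ⟨le_csSup hbdd haS, csSup_le ⟨a, haS⟩ (fun t ht => ht.1.2)⟩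
  have hSsub : S ⊆ Icc a b := fun t ht => ⟨ht.1.1, ht.1.2.trans ht'.2⟩
  have hτcl : τ ∈ closure S := csSup_mem_closure ⟨a, haS⟩ hbdd
  have hne : (nhdsWithin τ S).NeBot := mem_closure_iff_nhdsWithin_neBot.mp hτcl
  have htend : Tendsto f (nhdsWithin τ S) (nhds (f τ)) :=
    (hc τ ⟨hτmem.1, hτmem.2.trans ht'.2⟩).mono_left (nhdsWithin_mono _ hSsub)
  have hfτ : M ≤ f τ :=
    ge_of_tendsto htend (eventually_nhdsWithin_of_forall (fun t ht => ht.2))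
  have hττ' : τ < t' := by
    rcases eq_or_lt_of_le hτmem.2 with h | h
    · exact absurd hfτ (by rw [h]; exact not_le.2 hlt)
    · exact h
  have h3 : ∀ t ∈ Ioc τ t', f t < M := by
    intro t ht
    by_contra hge
    push_neg at hge
    have : t ∈ S := ⟨⟨hτmem.1.trans ht.1.le, ht.2⟩, hge⟩
    exact absurd (le_csSup hbdd this) (not_le.2 ht.1)
  have hmono : MonotoneOn f (Icc τ t') := by
    apply mono_aux (hc.mono (Icc_subset_Icc hτmem.1 ht'.2))
    · intro t ht
      exact hd t ⟨lt_of_le_of_lt hτmem.1 ht.1, lt_of_lt_of_le ht.2 ht'.2⟩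
    · intro t ht
      exact hF t ⟨lt_of_le_of_lt hτmem.1 ht.1, lt_of_lt_of_le ht.2 ht'.2⟩
        (h3 t ⟨ht.1, ht.2.le⟩).le
  have := hmono ⟨le_refl τ, hττ'.le⟩ ⟨hττ'.le, le_refl t'⟩ hττ'.le
  exact absurd (hfτ.trans this) (not_le.2 hlt)

lemma barrier_le {f F : ℝ → ℝ} {a b M : ℝ}
    (hc : ContinuousOn f (Icc a b))
    (hd : ∀ t ∈ Ioo a b, HasDerivAt f (F t) t)
    (hFa : f a ≤ M)
    (hF : ∀ t ∈ Ioo a b, M ≤ f t → F t ≤ 0) :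
    ∀ t ∈ Icc a b, f t ≤ M := by
  have key := barrier_ge (f := fun t => -f t) (F := fun t => -F t) (M := -M)
    (hc.neg) (fun t ht => (hd t ht).neg) (by simpa using hFa)
    (fun t ht h => by
      have h' : M ≤ f t := by simpa using h
      simpa using hF t ht h')
  intro t ht
  have h2 := key t ht
  simp only [neg_le_neg_iff] at h2
  simpa using h2

lemma slope_nonpos_left {f : ℝ → ℝ} {d a t₀ C : ℝ} (h : HasDerivAt f d t₀) (ha : a < t₀)
    (hgt : ∀ t ∈ Ioo a t₀, C ≤ f t) (heq : f t₀ = C) : d ≤ 0 := by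
  have h1 : Tendsto (slope f t₀) (nhdsWithin t₀ (Iio t₀)) (nhds d) :=
    (hasDerivAt_iff_tendsto_slope.mp h).mono_left
      (nhdsWithin_mono _ (fun x hx => ne_of_lt hx))
  refine le_of_tendsto h1 ?_
  filter_upwards [Ioo_mem_nhdsLT_of_mem ⟨ha, le_refl t₀⟩] with t ht
  rw [slope_def_field]
  apply div_nonpos_of_nonneg_of_nonpos
  · rw [heq]; linarith [hgt t ht]
  · linarith [ht.2]

lemma absmul_hasDeriv (y : ℝ) : HasDerivAt (fun z : ℝ => z * |z|) (2 * |y|) y := by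
  rcases lt_trichotomy y 0 with hy | hy | hy
  · have hev : (fun z : ℝ => z * |z|) =ᶠ[nhds y] fun z => -(z * z) := by
      filter_upwards [Iio_mem_nhds hy] with z hz
      rw [abs_of_neg hz]; ring
    have h1 : HasDerivAt (fun z : ℝ => -(z * z)) (2 * |y|) y := by
      have h := ((hasDerivAt_id y).mul (hasDerivAt_id y)).neg
      rw [show (2:ℝ) * |y| = -(1 * id y + id y * 1) by
        rw [abs_of_neg hy]; simp only [id, one_mul, mul_one]; ring]
      exact h
    exact h1.congr_of_eventuallyEq hev
  · subst hy
    have h0 : HasDerivAt (fun z : ℝ => z * |z|) 0 0 := by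
      rw [hasDerivAt_iff_isLittleO, Asymptotics.isLittleO_iff]
      intro ε hε
      filter_upwards [Metric.ball_mem_nhds (0:ℝ) hε] with z hz
      simp only [Metric.mem_ball, Real.dist_eq, sub_zero] at hz
      simp only [sub_zero, smul_zero, mul_zero, sub_zero, abs_zero]
      rw [Real.norm_eq_abs, Real.norm_eq_abs, abs_mul, abs_abs]
      calc |z| * |z| ≤ ε * |z| := by nlinarith [abs_nonneg z]
        _ = ε * |z| := rfl
    simpa using h0
  · have hev : (fun z : ℝ => z * |z|) =ᶠ[nhds y] fun z => z * z := by
      filter_upwards [Ioi_mem_nhds hy] with z hz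
      rw [abs_of_pos hz]
    have h1 : HasDerivAt (fun z : ℝ => z * z) (2 * |y|) y := by
      have h := (hasDerivAt_id y).mul (hasDerivAt_id y)
      rw [show (2:ℝ) * |y| = 1 * id y + id y * 1 by
        rw [abs_of_pos hy]; simp only [id, one_mul, mul_one]; ring]
      exact h
    exact h1.congr_of_eventuallyEq hev

lemma phi_eq {b k : ℝ} {φ : ℝ → ℝ}
    (hφ : ∀ y : ℝ, φ y = if 0 ≤ y then b / 2 * y ^ 2 + k * y else -(b / 2) * y ^ 2 + k * y) :
    ∀ y : ℝ, φ y = b / 2 * (y * |y|) + k * y := by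
  intro y
  rw [hφ y]
  rcases le_or_gt 0 y with h | h
  · rw [if_pos h, abs_of_nonneg h]; ring
  · rw [if_neg (not_le.2 h), abs_of_neg h]; ring

lemma phi_deriv {b k : ℝ} {φ : ℝ → ℝ}
    (hφ : ∀ y : ℝ, φ y = if 0 ≤ y then b / 2 * y ^ 2 + k * y else -(b / 2) * y ^ 2 + k * y)
    (y : ℝ) : HasDerivAt φ (b * |y| + k) y := by
  have h1 : HasDerivAt (fun z : ℝ => b / 2 * (z * |z|) + k * z) (b / 2 * (2 * |y|) + k * 1) y :=
    ((absmul_hasDeriv y).const_mul (b / 2)).add ((hasDerivAt_id y).const_mul k)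
  have h2 : b / 2 * (2 * |y|) + k * 1 = b * |y| + k := by ring
  rw [h2] at h1
  exact h1.congr_of_eventuallyEq (Eventually.of_forall (fun z => phi_eq hφ z))

lemma phi_cont {b k : ℝ} {φ : ℝ → ℝ}
    (hφ : ∀ y : ℝ, φ y = if 0 ≤ y then b / 2 * y ^ 2 + k * y else -(b / 2) * y ^ 2 + k * y) :
    Continuous φ :=
  continuous_iff_continuousAt.2 (fun y => (phi_deriv hφ y).continuousAt)

lemma phi_mono {b k : ℝ} {φ : ℝ → ℝ} (hb : 0 < b) (hk : 0 < k)
    (hφ : ∀ y : ℝ, φ y = if 0 ≤ y then b / 2 * y ^ 2 + k * y else -(b / 2) * y ^ 2 + k * y)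
    {u v : ℝ} (huv : u ≤ v) : φ u ≤ φ v := by
  rw [phi_eq hφ u, phi_eq hφ v]
  rcases le_or_gt 0 u with h1 | h1
  · rw [abs_of_nonneg h1, abs_of_nonneg (h1.trans huv)]
    nlinarith [mul_nonneg hb.le (mul_nonneg (by linarith : (0:ℝ) ≤ v - u) (by linarith : (0:ℝ) ≤ v + u)),
      mul_nonneg hk.le (by linarith : (0:ℝ) ≤ v - u)]
  · rcases le_or_gt 0 v with h2 | h2
    · rw [abs_of_neg h1, abs_of_nonneg h2]
      nlinarith [mul_nonneg hb.le (mul_self_nonneg u), mul_nonneg hb.le (mul_self_nonneg v),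
        mul_nonneg hk.le (by linarith : (0:ℝ) ≤ v - u)]
    · rw [abs_of_neg h1, abs_of_neg h2]
      nlinarith [mul_nonneg hb.le (mul_nonneg (by linarith : (0:ℝ) ≤ v - u) (by linarith : (0:ℝ) ≤ -(u + v))),
        mul_nonneg hk.le (by linarith : (0:ℝ) ≤ v - u)]

lemma conserve {b k g u s e : ℝ} {x ψ φ : ℝ → ℝ}
    (hse : s ≤ e)
    (hφ : ∀ y : ℝ, φ y = if 0 ≤ y then b / 2 * y ^ 2 + k * y else -(b / 2) * y ^ 2 + k * y)
    (hxc : ContinuousOn x (Icc s e)) (hψc : ContinuousOn ψ (Icc s e))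
    (hψd : ∀ t ∈ Ioo s e, HasDerivAt ψ (-1 + ψ t * (b * |x t| + k)) t)
    (hxd : ∀ t ∈ Ioo s e, HasDerivAt x (u - φ (x t) - g) t) :
    ψ e * (φ (x e) + (g - u)) - x e = ψ s * (φ (x s) + (g - u)) - x s := by
  apply const_aux hse (F := fun _ => (0:ℝ)) (f := fun t => ψ t * (φ (x t) + (g - u)) - x t)
  · apply ContinuousOn.sub _ hxc
    apply hψc.mul
    exact (((phi_cont hφ).comp_continuousOn hxc).add continuousOn_const)
  · intro t ht
    have hx' := hxd t ht
    have hφx : HasDerivAt (fun t => φ (x t)) ((b * |x t| + k) * (u - φ (x t) - g)) t :=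
      (phi_deriv hφ (x t)).comp t hx'
    have hE : HasDerivAt (fun t => ψ t * (φ (x t) + (g - u)) - x t)
        ((-1 + ψ t * (b * |x t| + k)) * (φ (x t) + (g - u))
          + ψ t * ((b * |x t| + k) * (u - φ (x t) - g)) - (u - φ (x t) - g)) t :=
      ((hψd t ht).mul (hφx.add_const (g - u))).sub hx'
    convert hE using 1
    ring
  · intro t ht; rfl
lemma sqh {b k m D : ℝ} (hb : 0 < b) (h2 : (b * m + k) ^ 2 = k ^ 2 + 2 * b * D) :
    b / 2 * m ^ 2 + k * m = D := by nlinarith [h2, hb, sq_nonneg (b * m + k)]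

lemma alg1 {al b k g x1 x2 : ℝ} (hal : 0 < al) (hb : 0 < b)
    (hcons : al * (b / 2 * x2 ^ 2 + k * x2 + (g - 0)) - x2
      = al * (b / 2 * x1 ^ 2 + k * x1 + (g - 0)) - x1)
    (hE : al * (b * x1 + k) ≤ 1) (h21 : x2 ≤ x1) (h2 : 0 ≤ x2) : x1 = x2 := by
  have hd : x1 ≤ x2 := by
    by_contra hcon
    push_neg at hcon
    nlinarith [mul_pos (mul_pos hal hb) (mul_pos (sub_pos.2 hcon) (sub_pos.2 hcon)),
      mul_nonneg (sub_nonneg.2 hE) (sub_pos.2 hcon).le]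
  linarith

lemma alg_step1 {al b k x1 : ℝ} (hal : 0 < al) (hb : 0 < b)
    (hE : al * (b * x1 + k) ≤ 1) (hx1 : 0 < x1) :
    al * (b / 2 * x1 ^ 2 + k * x1) < x1 := by
  nlinarith [mul_pos (mul_pos hal hb) (mul_pos hx1 hx1),
    mul_nonneg (sub_nonneg.2 hE) hx1.le]

lemma alg2 {al b k g m x1 x2 : ℝ} (hal : 0 < al) (hb : 0 < b) (hm : 0 < m)
    (hm2 : b / 2 * m ^ 2 + k * m = g) (hE : al * (b * x1 + k) ≤ 1) (hx1 : 0 < x1)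
    (hcons : al * (-(b / 2) * x2 ^ 2 + k * x2 + g) - x2
      = al * (b / 2 * x1 ^ 2 + k * x1 + g) - x1)
    (hkey : al * (-(b / 2) * x2 ^ 2 + k * x2 + g) - x2 ≤ m)
    (hx2 : x2 < 0) (hxm : -m < x2) : False := by
  have hstep1 := alg_step1 hal hb hE hx1
  have hP : al * (-(b / 2) * x2 ^ 2 + k * x2 + g) - x2 < al * g := by nlinarith [hcons]
  have h3 : 1 - al * k - al * (b / 2) * (-x2) < 0 := by
    by_contra hcon
    push_neg at hcon
    nlinarith [mul_nonneg (neg_nonneg.2 hx2.le) hcon]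
  have h4 : 0 ≤ 1 - al * k - al * (b / 2) * (m + -x2) := by
    by_contra hcon
    push_neg at hcon
    nlinarith [mul_pos (by linarith : (0:ℝ) < m + x2)
      (by linarith : (0:ℝ) < -(1 - al * k - al * (b / 2) * (m + -x2)))]
  have h5 : 0 < al * (b / 2) * m := by positivity
  linarith

lemma lip_pos {b k g m z x1 : ℝ} (hb : 0 < b) (hm : 0 < m) (hx1 : 0 < x1)
    (hm2 : b / 2 * m ^ 2 + k * m = g) (hz : 0 ≤ z) (hzx : z ≤ x1) :
    b / 2 * z ^ 2 + k * z + g ≤ (b * (m + x1) + k) * (z + m) := by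
  nlinarith [mul_nonneg hb.le (mul_nonneg hz (sub_nonneg.2 hzx)),
    mul_nonneg hb.le (mul_nonneg hm.le hz),
    mul_nonneg hb.le (mul_nonneg hm.le hm.le),
    mul_nonneg hb.le (mul_nonneg hx1.le hm.le)]

lemma lip_neg {b k g m z x1 : ℝ} (hb : 0 < b) (hm : 0 < m) (hx1 : 0 < x1)
    (hm2 : b / 2 * m ^ 2 + k * m = g) (hz : z < 0) (hzm : -m ≤ z) :
    -(b / 2) * z ^ 2 + k * z + g ≤ (b * (m + x1) + k) * (z + m) := by
  nlinarith [mul_nonneg hb.le (mul_nonneg (by linarith : (0:ℝ) ≤ z + m)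
    (by linarith : (0:ℝ) ≤ m / 2 + x1 + z / 2))]

set_option maxHeartbeats 1000000

/-- Nonexistence of type-III extremals (control pattern u = (1,0,1,0))
    for quadratic friction. -/
theorem stmt_13 (b k g : ℝ) (hb : 0 < b) (hk : 0 < k) (hg0 : 0 < g) (hg1 : g < 1)
    (φ : ℝ → ℝ)
    (hφ : ∀ y : ℝ, φ y = if 0 ≤ y then b / 2 * y ^ 2 + k * y else -(b / 2) * y ^ 2 + k * y) :
    ¬ ∃ (α t₁ t₂ t₃ T : ℝ) (x ψ : ℝ → ℝ),
      0 < α ∧ α < 1 / k ∧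
      0 < t₁ ∧ t₁ < t₂ ∧ t₂ < t₃ ∧ t₃ < T ∧
      ContinuousOn x (Set.Icc 0 T) ∧ ContinuousOn ψ (Set.Icc 0 T) ∧
      (∀ t ∈ Set.Icc (0:ℝ) T, HasDerivAt ψ (-1 + ψ t * (b * |x t| + k)) t) ∧
      ψ T = 0 ∧
      x 0 = 0 ∧
      (∀ t ∈ Set.Ioo 0 t₁ ∪ Set.Ioo t₂ t₃, HasDerivAt x (1 - φ (x t) - g) t) ∧
      (∀ t ∈ Set.Ioo t₁ t₂ ∪ Set.Ioo t₃ T, HasDerivAt x (-(φ (x t)) - g) t) ∧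
      ψ t₁ = α ∧ ψ t₂ = α ∧ ψ t₃ = α ∧
      (∀ t ∈ Set.Ioo 0 t₁ ∪ Set.Ioo t₂ t₃, α < ψ t) ∧
      (∀ t ∈ Set.Ioo t₁ t₂ ∪ Set.Ioo t₃ T, ψ t < α) := by
  rintro ⟨α, t₁, t₂, t₃, T, x, ψ, hα0, hα1, ht₁, h12, h23, h3T, hxc, hψc, hψd, hψT, hx0,
    hx1d, hx0d, hψ1, hψ2, hψ3, hgt, hlt⟩
  have hφ0 : φ 0 = 0 := by rw [hφ 0]; simp
  -- the quantity m with x_min = -m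
  have hD0 : (0:ℝ) ≤ k ^ 2 + 2 * b * g := by positivity
  have hsq : Real.sqrt (k ^ 2 + 2 * b * g) ^ 2 = k ^ 2 + 2 * b * g := Real.sq_sqrt hD0
  have hsk : k < Real.sqrt (k ^ 2 + 2 * b * g) := by
    rw [Real.lt_sqrt hk.le]
    have := mul_pos hb hg0
    linarith
  set m : ℝ := (Real.sqrt (k ^ 2 + 2 * b * g) - k) / b with hmdef
  have hm_pos : 0 < m := div_pos (by linarith) hb
  have hbm : b * m + k = Real.sqrt (k ^ 2 + 2 * b * g) := by
    rw [hmdef]; field_simp; ring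
  have hm2 : b / 2 * m ^ 2 + k * m = g :=
    sqh hb (by rw [hbm]; exact hsq)
  have hφm : φ (-m) = -g := by
    rw [hφ (-m), if_neg (by push_neg; linarith)]
    ring_nf
    ring_nf at hm2
    linarith [hm2]
  -- the quantity Q with phi Q = 1 - g
  have hE0 : (0:ℝ) ≤ k ^ 2 + 2 * b * (1 - g) := by
    have := mul_pos hb (by linarith : (0:ℝ) < 1 - g)
    have := sq_nonneg k
    linarith
  have hsqQ : Real.sqrt (k ^ 2 + 2 * b * (1 - g)) ^ 2 = k ^ 2 + 2 * b * (1 - g) :=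
    Real.sq_sqrt hE0
  have hskQ : k ≤ Real.sqrt (k ^ 2 + 2 * b * (1 - g)) := by
    rw [Real.le_sqrt hk.le hE0]
    have := mul_pos hb (by linarith : (0:ℝ) < 1 - g)
    linarith
  set Q : ℝ := (Real.sqrt (k ^ 2 + 2 * b * (1 - g)) - k) / b with hQdef
  have hQ0 : 0 ≤ Q := div_nonneg (by linarith) hb.le
  have hbQ : b * Q + k = Real.sqrt (k ^ 2 + 2 * b * (1 - g)) := by
    rw [hQdef]; field_simp; ring
  have hφQ : φ Q = 1 - g := by
    rw [hφ Q, if_pos hQ0]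
    exact sqh hb (by rw [hbQ]; exact hsqQ)
  -- time ordering facts
  have h0T : (0:ℝ) < T := by linarith
  -- continuity restrictions
  have hxc1 : ContinuousOn x (Set.Icc 0 t₁) := hxc.mono (Set.Icc_subset_Icc le_rfl (by linarith))
  have hxc2 : ContinuousOn x (Set.Icc t₁ t₂) :=
    hxc.mono (Set.Icc_subset_Icc (by linarith) (by linarith))
  have hxc3 : ContinuousOn x (Set.Icc t₂ t₃) :=
    hxc.mono (Set.Icc_subset_Icc (by linarith) (by linarith))
  have hxc4 : ContinuousOn x (Set.Icc t₃ T) :=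
    hxc.mono (Set.Icc_subset_Icc (by linarith) le_rfl)
  have hψc2 : ContinuousOn ψ (Set.Icc t₁ t₂) :=
    hψc.mono (Set.Icc_subset_Icc (by linarith) (by linarith))
  have hψc3 : ContinuousOn ψ (Set.Icc t₂ t₃) :=
    hψc.mono (Set.Icc_subset_Icc (by linarith) (by linarith))
  have hψc4 : ContinuousOn ψ (Set.Icc t₃ T) :=
    hψc.mono (Set.Icc_subset_Icc (by linarith) le_rfl)
  -- derivative restrictions
  have hx1d1 : ∀ t ∈ Set.Ioo 0 t₁, HasDerivAt x (1 - φ (x t) - g) t :=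
    fun t ht => hx1d t (Or.inl ht)
  have hx1d3 : ∀ t ∈ Set.Ioo t₂ t₃, HasDerivAt x (1 - φ (x t) - g) t :=
    fun t ht => hx1d t (Or.inr ht)
  have hx0d2 : ∀ t ∈ Set.Ioo t₁ t₂, HasDerivAt x (0 - φ (x t) - g) t := by
    intro t ht
    have h := hx0d t (Or.inl ht)
    convert h using 1; ring
  have hx0d4 : ∀ t ∈ Set.Ioo t₃ T, HasDerivAt x (0 - φ (x t) - g) t := by
    intro t ht
    have h := hx0d t (Or.inr ht)
    convert h using 1; ring
  have hψd2 : ∀ t ∈ Set.Ioo t₁ t₂, HasDerivAt ψ (-1 + ψ t * (b * |x t| + k)) t :=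
    fun t ht => hψd t ⟨by linarith [ht.1], by linarith [ht.2]⟩
  have hψd3 : ∀ t ∈ Set.Ioo t₂ t₃, HasDerivAt ψ (-1 + ψ t * (b * |x t| + k)) t :=
    fun t ht => hψd t ⟨by linarith [ht.1], by linarith [ht.2]⟩
  have hψd4 : ∀ t ∈ Set.Ioo t₃ T, HasDerivAt ψ (-1 + ψ t * (b * |x t| + k)) t :=
    fun t ht => hψd t ⟨by linarith [ht.1], by linarith [ht.2]⟩
  -- arc 1 : x stays in [0, Q] and is monotone
  have hA : ∀ t ∈ Set.Icc 0 t₁, 0 ≤ x t := by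
    apply barrier_ge hxc1 hx1d1 (by rw [hx0])
    intro t ht hle
    have h1 : φ (x t) ≤ φ 0 := phi_mono hb hk hφ hle
    rw [hφ0] at h1
    linarith
  have hB : ∀ t ∈ Set.Icc 0 t₁, x t ≤ Q := by
    apply barrier_le hxc1 hx1d1 (by rw [hx0]; exact hQ0)
    intro t ht hge
    have h1 : φ Q ≤ φ (x t) := phi_mono hb hk hφ hge
    rw [hφQ] at h1
    linarith
  have hC : MonotoneOn x (Set.Icc 0 t₁) := by
    apply mono_aux hxc1 hx1d1
    intro t ht
    have h1 : φ (x t) ≤ φ Q := phi_mono hb hk hφ (hB t (Set.Ioo_subset_Icc_self ht))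
    rw [hφQ] at h1
    linarith
  have hx₁0 : 0 ≤ x t₁ := hA t₁ ⟨ht₁.le, le_rfl⟩
  have hD : 0 < x t₁ := by
    rcases eq_or_lt_of_le hx₁0 with h | h
    · exfalso
      have hall : ∀ t ∈ Set.Icc 0 t₁, x t = 0 := by
        intro t ht
        have h1 := hC ht ⟨ht₁.le, le_rfl⟩ ht.2
        have h2 := hA t ht
        rw [← h] at h1
        linarith
      have htmid : t₁ / 2 ∈ Set.Ioo 0 t₁ := ⟨by linarith, by linarith⟩
      have hEq : x =ᶠ[nhds (t₁ / 2)] fun _ => (0:ℝ) := by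
        filter_upwards [isOpen_Ioo.mem_nhds htmid] with s hs
        exact hall s (Set.Ioo_subset_Icc_self hs)
      have hder0 : HasDerivAt x 0 (t₁ / 2) :=
        (hasDerivAt_const (t₁ / 2) (0:ℝ)).congr_of_eventuallyEq hEq
      have hder1 := hx1d1 (t₁ / 2) htmid
      have huniq := hder0.unique hder1
      rw [hall (t₁ / 2) (Set.Ioo_subset_Icc_self htmid), hφ0] at huniq
      linarith
    · exact h
  -- psi' at t1 is nonpositive : alpha * (b x1 + k) <= 1
  have hE : α * (b * x t₁ + k) ≤ 1 := by
    have hdψ := hψd t₁ ⟨by linarith, by linarith⟩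
    have hslope := slope_nonpos_left hdψ ht₁ (fun t ht => (hgt t (Or.inl ht)).le) hψ1
    rw [hψ1, abs_of_nonneg hx₁0] at hslope
    linarith
  -- arc 2 : x >= -m and antitone
  have hF2 : ∀ t ∈ Set.Icc t₁ t₂, -m ≤ x t := by
    apply barrier_ge hxc2 hx0d2 (by linarith)
    intro t ht hle
    have h1 : φ (x t) ≤ φ (-m) := phi_mono hb hk hφ hle
    rw [hφm] at h1
    linarith
  have hG2 : AntitoneOn x (Set.Icc t₁ t₂) := by
    apply anti_aux hxc2 hx0d2
    intro t ht
    have h1 : φ (-m) ≤ φ (x t) := phi_mono hb hk hφ (hF2 t (Set.Ioo_subset_Icc_self ht))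
    rw [hφm] at h1
    linarith
  -- conservation on arc 2 (u = 0)
  have hcons2 := conserve (u := 0) h12.le hφ hxc2 hψc2 hψd2 hx0d2
  rw [hψ1, hψ2] at hcons2
  have hφx₁ : φ (x t₁) = b / 2 * (x t₁) ^ 2 + k * (x t₁) := by rw [hφ (x t₁), if_pos hx₁0]
  rcases le_or_gt 0 (x t₂) with hcase | hcase
  · -- case x t2 >= 0 : forces x constant on arc2, contradiction
    have hx21 : x t₂ ≤ x t₁ := hG2 ⟨le_rfl, h12.le⟩ ⟨h12.le, le_rfl⟩ h12.le
    have hφx₂ : φ (x t₂) = b / 2 * (x t₂) ^ 2 + k * (x t₂) := by rw [hφ (x t₂), if_pos hcase]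
    rw [hφx₁, hφx₂] at hcons2
    have heq : x t₁ = x t₂ := alg1 hα0 hb hcons2 hE hx21 hcase
    have hall : ∀ t ∈ Set.Icc t₁ t₂, x t = x t₁ := by
      intro t ht
      have h1 := hG2 ⟨le_rfl, h12.le⟩ ht ht.1
      have h2 := hG2 ht ⟨h12.le, le_rfl⟩ ht.2
      rw [← heq] at h2
      linarith
    have htmid : (t₁ + t₂) / 2 ∈ Set.Ioo t₁ t₂ := ⟨by linarith, by linarith⟩
    have hEq : x =ᶠ[nhds ((t₁ + t₂) / 2)] fun _ => x t₁ := by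
      filter_upwards [isOpen_Ioo.mem_nhds htmid] with s hs
      exact hall s (Set.Ioo_subset_Icc_self hs)
    have hder0 : HasDerivAt x 0 ((t₁ + t₂) / 2) :=
      (hasDerivAt_const ((t₁ + t₂) / 2) (x t₁)).congr_of_eventuallyEq hEq
    have hder1 := hx0d2 ((t₁ + t₂) / 2) htmid
    have huniq := hder0.unique hder1
    rw [hall ((t₁ + t₂) / 2) (Set.Ioo_subset_Icc_self htmid)] at huniq
    have hφpos : 0 ≤ φ (x t₁) := by rw [← hφ0]; exact phi_mono hb hk hφ hx₁0
    linarith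
  · -- case x t2 < 0
    have hφx₂ : φ (x t₂) = -(b / 2) * (x t₂) ^ 2 + k * (x t₂) := by
      rw [hφ (x t₂), if_neg (not_le.2 hcase)]
    -- x >= -m on arcs 3 and 4
    have hx₂m : -m ≤ x t₂ := hF2 t₂ ⟨h12.le, le_rfl⟩
    have hF3 : ∀ t ∈ Set.Icc t₂ t₃, -m ≤ x t := by
      apply barrier_ge hxc3 hx1d3 hx₂m
      intro t ht hle
      have h1 : φ (x t) ≤ φ (-m) := phi_mono hb hk hφ hle
      rw [hφm] at h1
      linarith
    have hF4 : ∀ t ∈ Set.Icc t₃ T, -m ≤ x t := by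
      apply barrier_ge hxc4 hx0d4 (hF3 t₃ ⟨h23.le, le_rfl⟩)
      intro t ht hle
      have h1 : φ (x t) ≤ φ (-m) := phi_mono hb hk hφ hle
      rw [hφm] at h1
      linarith
    have hxT : -m ≤ x T := hF4 T ⟨h3T.le, le_rfl⟩
    -- conservation on arcs 3 (u=1) and 4 (u=0)
    have hcons3 := conserve (u := 1) h23.le hφ hxc3 hψc3 hψd3 hx1d3
    rw [hψ2, hψ3] at hcons3
    have hcons4 := conserve (u := 0) h3T.le hφ hxc4 hψc4 hψd4 hx0d4
    rw [hψT, hψ3] at hcons4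
    -- combine : alpha*(phi x2 + g) - x2 = -x T <= m
    have hkey : α * (φ (x t₂) + g) - x t₂ ≤ m := by linarith [hcons3, hcons4, hxT]
    rcases eq_or_lt_of_le hx₂m with hxm | hxm
    · -- x t2 = -m exactly : Gronwall backward on arc 2 forces x t1 = -m < 0, contradiction
      exfalso
      set L : ℝ := b * (m + x t₁) + k with hLdef
      have hL0 : 0 < L := by
        have := mul_pos hb (by linarith : (0:ℝ) < m + x t₁)
        rw [hLdef]; linarith
      have hmono : MonotoneOn (fun t => (x t + m) * Real.exp (L * t)) (Set.Icc t₁ t₂) := by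
        apply mono_aux
          (F := fun t => ((0 - φ (x t) - g) + L * (x t + m)) * Real.exp (L * t))
        · exact (hxc2.add continuousOn_const).mul
            (Real.continuous_exp.comp (continuous_const.mul continuous_id)).continuousOn
        · intro t ht
          have hder : HasDerivAt (fun t => (x t + m) * Real.exp (L * t))
              ((0 - φ (x t) - g) * Real.exp (L * t)
                + (x t + m) * (Real.exp (L * t) * L)) t := by
            have h1 := (hx0d2 t ht).add_const m
            have h2 : HasDerivAt (fun t : ℝ => Real.exp (L * t)) (Real.exp (L * t) * L) t := by
              have := ((hasDerivAt_id t).const_mul L).exp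
              simpa using this
            exact h1.mul h2
          convert hder using 1
          ring
        · intro t ht
          have hzm : -m ≤ x t := hF2 t (Set.Ioo_subset_Icc_self ht)
          have hzx₁ : x t ≤ x t₁ := hG2 ⟨le_rfl, h12.le⟩ (Set.Ioo_subset_Icc_self ht) ht.1.le
          have hlip : φ (x t) + g ≤ L * (x t + m) := by
            rcases le_or_gt 0 (x t) with hz | hz
            · rw [hφ (x t), if_pos hz, hLdef]
              linarith [lip_pos hb hm_pos hD hm2 hz hzx₁]
            · rw [hφ (x t), if_neg (not_le.2 hz), hLdef]
              linarith [lip_neg (x1 := x t₁) hb hm_pos hD hm2 hz hzm]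
          have hexp : 0 < Real.exp (L * t) := Real.exp_pos _
          have : 0 ≤ (0 - φ (x t) - g) + L * (x t + m) := by linarith
          positivity
      have h1 := hmono ⟨le_rfl, h12.le⟩ ⟨h12.le, le_rfl⟩ h12.le
      simp only at h1
      rw [← hxm] at h1
      have h2 : (0:ℝ) < (x t₁ + m) * Real.exp (L * t₁) :=
        mul_pos (by linarith) (Real.exp_pos _)
      simp only [neg_add_cancel, zero_mul] at h1
      linarith
    · -- -m < x t2 < 0 : algebraic contradiction
      rw [hφx₁, hφx₂] at hcons2
      rw [hφx₂] at hkey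
      exact alg2 hα0 hb hm_pos hm2 hE hD (by linarith [hcons2]) hkey hcase hxm
end

section
/- Let α, b, g, k, z₀ be real numbers and set D(z) = 2bg − k² + z². Define ψ(z) = (α·D(z₀) + 2(z − z₀))/D(z) at all z with D(z) ≠ 0, and suppose D(z₀) ≠ 0. Then ψ(z₀) = α, and at every z with D(z) ≠ 0 the function ψ is differentiable with ψ'(z) = 2·(1 − z·ψ(z))/D(z). -/
/-- Explicit solution of dψ/dz = 2(1 − ψz)/(2bg − k² + z²) with
    ψ(z₀) = α. -/
theorem stmt_14 (α b g k z₀ : ℝ)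
    (D : ℝ → ℝ) (hD : ∀ z : ℝ, D z = 2 * b * g - k ^ 2 + z ^ 2)
    (ψ : ℝ → ℝ)
    (hψ : ∀ z : ℝ, D z ≠ 0 → ψ z = (α * D z₀ + 2 * (z - z₀)) / D z)
    (hz₀ : D z₀ ≠ 0) :
    ψ z₀ = α ∧
    ∀ z : ℝ, D z ≠ 0 → HasDerivAt ψ (2 * (1 - z * ψ z) / D z) z := by
  constructor
  · rw [hψ z₀ hz₀]
    field_simp
    ring
  · intro z hz
    set C := α * D z₀ with hC
    set c := 2 * b * g - k ^ 2 with hc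
    have hDz : D z = c + z ^ 2 := hD z
    -- the explicit rational function
    set f : ℝ → ℝ := fun t => (C + 2 * (t - z₀)) / (c + t ^ 2) with hf
    have hcont : Continuous fun t : ℝ => c + t ^ 2 := by continuity
    have hopen : IsOpen {t : ℝ | c + t ^ 2 ≠ 0} :=
      isOpen_compl_iff.mpr (isClosed_singleton.preimage hcont)
    have hznz : c + z ^ 2 ≠ 0 := by rw [← hDz]; exact hz
    have hmem : {t : ℝ | c + t ^ 2 ≠ 0} ∈ nhds z := hopen.mem_nhds hznz
    have heq : ψ =ᶠ[nhds z] f := by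
      filter_upwards [hmem] with t ht
      have : D t ≠ 0 := by rw [hD t]; exact ht
      rw [hψ t this, hf, hD t, hC]
    have h1 : HasDerivAt (fun t : ℝ => C + 2 * (t - z₀)) 2 z := by
      have := ((hasDerivAt_id z).sub_const z₀).const_mul 2
      simpa using this.const_add C
    have h2 : HasDerivAt (fun t : ℝ => c + t ^ 2) (2 * z) z := by
      have := (hasDerivAt_pow 2 z).const_add c
      simpa [mul_comm] using this
    have hdf : HasDerivAt f ((2 * (c + z ^ 2) - (C + 2 * (z - z₀)) * (2 * z)) / (c + z ^ 2) ^ 2) z :=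
      h1.div h2 hznz
    have hψz : ψ z = (C + 2 * (z - z₀)) / (c + z ^ 2) := by
      rw [hψ z hz, hDz]
    have hval : (2 * (c + z ^ 2) - (C + 2 * (z - z₀)) * (2 * z)) / (c + z ^ 2) ^ 2
        = 2 * (1 - z * ψ z) / D z := by
      rw [hψz, hDz]
      field_simp
    rw [← hval]
    exact hdf.congr_of_eventuallyEq heq
end

section
/- Let b, k, g > 0 and x_min = (k − √(k² + 2bg))/b. For every x̂ with x_min < x̂ < 0, one has (k − b·x̂)² + b·(−(b/2)x̂² + k·x̂ + g) > 0 and (k − b·x̂) / ((k − b·x̂)² + b·(−(b/2)x̂² + k·x̂ + g)) > k/(k² + bg). -/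
/-- For x_min < xhat < 0, the value of ψ at which ψ'' vanishes
    exceeds the threshold k/(k² + bg). -/
theorem stmt_16 (b k g : ℝ) (hb : 0 < b) (hk : 0 < k) (hg : 0 < g)
    (xmin : ℝ) (hxmin : xmin = (k - Real.sqrt (k ^ 2 + 2 * b * g)) / b) :
    ∀ xhat : ℝ, xmin < xhat → xhat < 0 →
      0 < (k - b * xhat) ^ 2 + b * (-(b / 2) * xhat ^ 2 + k * xhat + g) ∧
      k / (k ^ 2 + b * g) <
        (k - b * xhat) / ((k - b * xhat) ^ 2 + b * (-(b / 2) * xhat ^ 2 + k * xhat + g)) := by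
  intro x h1 h2
  have hs : Real.sqrt (k ^ 2 + 2 * b * g) ^ 2 = k ^ 2 + 2 * b * g :=
    Real.sq_sqrt (by positivity)
  have hsp : 0 ≤ Real.sqrt (k ^ 2 + 2 * b * g) := Real.sqrt_nonneg _
  have hsk : k < Real.sqrt (k ^ 2 + 2 * b * g) := by nlinarith
  have hx : -(2 * g) / k < x := by
    have : -(2 * g) / k ≤ xmin := by
      rw [hxmin, div_le_div_iff₀ hk hb]
      nlinarith
    linarith
  have hxk : -(2 * g) < k * x := by
    rw [div_lt_iff₀ hk] at hx; nlinarith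
  have hD : 0 < (k - b * x) ^ 2 + b * (-(b / 2) * x ^ 2 + k * x + g) := by nlinarith
  refine ⟨hD, ?_⟩
  rw [div_lt_div_iff₀ (by positivity) hD]
  nlinarith [mul_pos hb hb, mul_pos (mul_pos hb hb) (neg_pos.mpr h2)]
end
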